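/- arXiv:1808.05442 — 3 statements merged into one kernel-verified Lean document; each statement's English description precedes it below -/
import Mathlib

section
/- Suppose in addition P(lim_{n→∞} T_n = ∞) = P(lim_{n→∞} S_n = ∞) = 1. Then for every n ≥ 1, α_n < ∞ and β_n < ∞ almost surely, so ξ̃_{α_n} = ξ_{α_n} and ξ̃_{β_n} = ξ_{β_n} almost surely, and the family {ξ_{α_n} : n ≥ 1} ∪ {ξ_{β_n} : n ≥ 1} is i.i.d. with each member uniform on {1,−1}. -/
open MeasureTheory ProbabilityTheory Filter Set

noncomputable section

variable {Ω : Type*}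

/-- `Q n = 1` if the `n`-th moves agree, `0` if they are opposite. -/
def Qproc (ξ η : ℕ → Ω → ℝ) (n : ℕ) (ω : Ω) : ℕ :=
  if ξ n ω = η n ω then 1 else 0

/-- `T n = ∑_{k=1}^n Q k`, the number of common movements up to step `n`. -/
def Tproc (ξ η : ℕ → Ω → ℝ) (n : ℕ) (ω : Ω) : ℕ :=
  ∑ k ∈ Finset.Icc 1 n, Qproc ξ η k ω

/-- `S n = n - T n`, the number of counter movements up to step `n`. -/
def Sproc (ξ η : ℕ → Ω → ℝ) (n : ℕ) (ω : Ω) : ℕ :=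
  n - Tproc ξ η n ω

/-- `α n = inf {k ≥ 1 : T k = n}`, with `inf ∅ = ⊤`, valued in `ℕ∞`. -/
def alphaProc (ξ η : ℕ → Ω → ℝ) (n : ℕ) (ω : Ω) : ℕ∞ :=
  ⨅ (k : ℕ) (_ : 1 ≤ k ∧ Tproc ξ η k ω = n), (k : ℕ∞)

/-- `β n = inf {k ≥ 1 : S k = n}`, with `inf ∅ = ⊤`, valued in `ℕ∞`. -/
def betaProc (ξ η : ℕ → Ω → ℝ) (n : ℕ) (ω : Ω) : ℕ∞ :=
  ⨅ (k : ℕ) (_ : 1 ≤ k ∧ Sproc ξ η k ω = n), (k : ℕ∞)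

/-- `ξ̃_{α n}`: equal to `ξ_i` on `{α n = i}` (`i < ∞`) and to `ζ n` on `{α n = ∞}`. -/
def xiAlpha (ξ η ζ : ℕ → Ω → ℝ) (n : ℕ) (ω : Ω) : ℝ :=
  if alphaProc ξ η n ω = ⊤ then ζ n ω else ξ (alphaProc ξ η n ω).toNat ω

/-- `ξ̃_{β m}`: equal to `ξ_i` on `{β m = i}` (`i < ∞`) and to `ψ m` on `{β m = ∞}`. -/
def xiBeta (ξ η ψ : ℕ → Ω → ℝ) (m : ℕ) (ω : Ω) : ℝ :=
  if betaProc ξ η m ω = ⊤ then ψ m ω else ξ (betaProc ξ η m ω).toNat ω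

/-- The common-movement walk `X n = ∑_{i=1}^n ξ̃_{α i}`. -/
def Xproc (ξ η ζ : ℕ → Ω → ℝ) (n : ℕ) (ω : Ω) : ℝ :=
  ∑ i ∈ Finset.Icc 1 n, xiAlpha ξ η ζ i ω

/-- The counter-movement walk `Y n = ∑_{i=1}^n ξ̃_{β i}`. -/
def Yproc (ξ η ψ : ℕ → Ω → ℝ) (n : ℕ) (ω : Ω) : ℝ :=
  ∑ i ∈ Finset.Icc 1 n, xiBeta ξ η ψ i ω

lemma iInfE_le_iff {p : ℕ → Prop} {N : ℕ} :
    (⨅ (k : ℕ) (_ : p k), (k : ℕ∞)) ≤ N ↔ ∃ k, k ≤ N ∧ p k := by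
  constructor
  · intro h
    by_contra hc
    push_neg at hc
    have h2 : (N : ℕ∞) + 1 ≤ ⨅ (k : ℕ) (_ : p k), (k : ℕ∞) := by
      refine le_iInf₂ fun k hk => ?_
      have : N + 1 ≤ k := by
        by_contra h2
        exact hc k (by omega) hk
      exact_mod_cast this
    have h3 : ((N+1:ℕ) : ℕ∞) ≤ (N : ℕ∞) := by push_cast; exact h2.trans h
    exact absurd (by exact_mod_cast h3) (by omega)
  · rintro ⟨k, hk, hpk⟩
    exact (iInf₂_le k hpk).trans (by exact_mod_cast hk)

lemma iInfE_eq_iff {p : ℕ → Prop} {N : ℕ} :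
    (⨅ (k : ℕ) (_ : p k), (k : ℕ∞)) = N ↔ p N ∧ ∀ k < N, ¬ p k := by
  constructor
  · intro h
    have h1 : ∃ k, k ≤ N ∧ p k := iInfE_le_iff.mp h.le
    have h2 : ∀ k < N, ¬ p k := by
      intro k hk hpk
      have : (⨅ (k : ℕ) (_ : p k), (k : ℕ∞)) ≤ k := iInf₂_le k hpk
      rw [h] at this
      exact absurd (by exact_mod_cast this) (by omega)
    obtain ⟨k, hk, hpk⟩ := h1
    rcases eq_or_lt_of_le hk with rfl | hlt
    · exact ⟨hpk, h2⟩
    · exact absurd hpk (h2 k hlt)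
  · rintro ⟨hpN, hlt⟩
    refine le_antisymm (iInf₂_le N hpN) (le_iInf₂ fun k hk => ?_)
    have : N ≤ k := by
      by_contra h2
      exact hlt k (by omega) hk
    exact_mod_cast this

lemma hits_of_le {f : ℕ → ℕ} (h0 : f 0 = 0) (hstep : ∀ k, f (k+1) ≤ f k + 1)
    (hmono : Monotone f) {n N : ℕ} (h1 : 1 ≤ n) (h2 : n ≤ f N) :
    ∃ k, 1 ≤ k ∧ k ≤ N ∧ f k = n := by
  induction N with
  | zero => omega
  | succ N ih =>
    by_cases h : n ≤ f N
    · obtain ⟨k, hk1, hk2, hk3⟩ := ih h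
      exact ⟨k, hk1, by omega, hk3⟩
    · have := hstep N
      have hm := hmono (Nat.le_succ N)
      exact ⟨N+1, by omega, le_refl _, by omega⟩

section Basic
variable (ξ η : ℕ → Ω → ℝ) (ω : Ω)

lemma T_zero : Tproc ξ η 0 ω = 0 := by simp [Tproc]

lemma Q_le_one (k : ℕ) : Qproc ξ η k ω ≤ 1 := by
  unfold Qproc; split <;> omega

lemma T_succ (N : ℕ) : Tproc ξ η (N+1) ω = Tproc ξ η N ω + Qproc ξ η (N+1) ω := by
  unfold Tproc
  rw [← Finset.sum_Icc_succ_top (by omega : 1 ≤ N + 1)]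

lemma T_mono : Monotone fun N => Tproc ξ η N ω := by
  apply monotone_nat_of_le_succ
  intro n
  rw [T_succ]; omega

lemma T_le (N : ℕ) : Tproc ξ η N ω ≤ N := by
  induction N with
  | zero => simp [T_zero]
  | succ N ih => rw [T_succ]; have := Q_le_one ξ η ω (N+1); omega

lemma S_zero : Sproc ξ η 0 ω = 0 := by simp [Sproc]

lemma S_succ (N : ℕ) : Sproc ξ η (N+1) ω = Sproc ξ η N ω + (1 - Qproc ξ η (N+1) ω) := by
  unfold Sproc
  rw [T_succ]
  have := T_le ξ η ω N
  have := Q_le_one ξ η ω (N+1)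
  omega

lemma S_mono : Monotone fun N => Sproc ξ η N ω := by
  apply monotone_nat_of_le_succ
  intro n
  rw [S_succ]; omega

lemma S_step (N : ℕ) : Sproc ξ η (N+1) ω ≤ Sproc ξ η N ω + 1 := by
  rw [S_succ]; omega

lemma T_step (N : ℕ) : Tproc ξ η (N+1) ω ≤ Tproc ξ η N ω + 1 := by
  rw [T_succ]; have := Q_le_one ξ η ω (N+1); omega

lemma alpha_le_iff {n N : ℕ} :
    alphaProc ξ η n ω ≤ N ↔ ∃ k, 1 ≤ k ∧ k ≤ N ∧ Tproc ξ η k ω = n := by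
  rw [alphaProc, iInfE_le_iff]
  tauto

lemma beta_le_iff {n N : ℕ} :
    betaProc ξ η n ω ≤ N ↔ ∃ k, 1 ≤ k ∧ k ≤ N ∧ Sproc ξ η k ω = n := by
  rw [betaProc, iInfE_le_iff]
  tauto

lemma alpha_eq_iff {n N : ℕ} :
    alphaProc ξ η n ω = N ↔ (1 ≤ N ∧ Tproc ξ η N ω = n) ∧
      ∀ k < N, ¬ (1 ≤ k ∧ Tproc ξ η k ω = n) := iInfE_eq_iff

lemma beta_eq_iff {n N : ℕ} :
    betaProc ξ η n ω = N ↔ (1 ≤ N ∧ Sproc ξ η N ω = n) ∧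
      ∀ k < N, ¬ (1 ≤ k ∧ Sproc ξ η k ω = n) := iInfE_eq_iff

lemma alpha_eq_succ_iff {n N : ℕ} (hn : 1 ≤ n) :
    alphaProc ξ η n ω = (N + 1 : ℕ) ↔
      Qproc ξ η (N+1) ω = 1 ∧ Tproc ξ η N ω + 1 = n := by
  rw [alpha_eq_iff]
  constructor
  · rintro ⟨⟨-, hT⟩, hbef⟩
    rw [T_succ] at hT
    have hQ := Q_le_one ξ η ω (N+1)
    rcases Nat.eq_zero_or_pos (Qproc ξ η (N+1) ω) with hq | hq
    · exfalso
      rcases Nat.eq_zero_or_pos N with rfl | hN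
      · rw [T_zero] at hT; omega
      · exact hbef N (by omega) ⟨hN, by omega⟩
    · omega
  · rintro ⟨hq, ht⟩
    refine ⟨⟨by omega, by rw [T_succ]; omega⟩, ?_⟩
    rintro k hk ⟨hk1, hTk⟩
    have := T_mono ξ η ω (show k ≤ N by omega)
    simp only at this
    omega

lemma beta_eq_succ_iff {n N : ℕ} (hn : 1 ≤ n) :
    betaProc ξ η n ω = (N + 1 : ℕ) ↔
      Qproc ξ η (N+1) ω = 0 ∧ Sproc ξ η N ω + 1 = n := by
  rw [beta_eq_iff]
  have hQ := Q_le_one ξ η ω (N+1)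
  constructor
  · rintro ⟨⟨-, hT⟩, hbef⟩
    rw [S_succ] at hT
    rcases Nat.eq_zero_or_pos (Qproc ξ η (N+1) ω) with hq | hq
    · omega
    · exfalso
      rcases Nat.eq_zero_or_pos N with rfl | hN
      · rw [S_zero] at hT; omega
      · exact hbef N (by omega) ⟨hN, by omega⟩
  · rintro ⟨hq, hs⟩
    refine ⟨⟨by omega, by rw [S_succ]; omega⟩, ?_⟩
    rintro k hk ⟨hk1, hSk⟩
    have := S_mono ξ η ω (show k ≤ N by omega)
    simp only at this
    omega

lemma alpha_ne_top_iff {n : ℕ} :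
    alphaProc ξ η n ω ≠ ⊤ ↔ ∃ k, 1 ≤ k ∧ Tproc ξ η k ω = n := by
  constructor
  · intro h
    obtain ⟨N, hN⟩ := WithTop.ne_top_iff_exists.mp h
    have := (alpha_eq_iff ξ η ω).mp hN.symm
    exact ⟨N, this.1.1, this.1.2⟩
  · rintro ⟨k, hk1, hk2⟩
    intro h
    have : alphaProc ξ η n ω ≤ (k : ℕ∞) := (alpha_le_iff ξ η ω).mpr ⟨k, hk1, le_refl _, hk2⟩
    rw [h] at this
    simp at this

lemma beta_ne_top_iff {n : ℕ} :
    betaProc ξ η n ω ≠ ⊤ ↔ ∃ k, 1 ≤ k ∧ Sproc ξ η k ω = n := by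
  constructor
  · intro h
    obtain ⟨N, hN⟩ := WithTop.ne_top_iff_exists.mp h
    have := (beta_eq_iff ξ η ω).mp hN.symm
    exact ⟨N, this.1.1, this.1.2⟩
  · rintro ⟨k, hk1, hk2⟩
    intro h
    have : betaProc ξ η n ω ≤ (k : ℕ∞) := (beta_le_iff ξ η ω).mpr ⟨k, hk1, le_refl _, hk2⟩
    rw [h] at this
    simp at this

lemma alpha_spec {n N : ℕ} (h : alphaProc ξ η n ω ≤ N) :
    ∃ i : ℕ, alphaProc ξ η n ω = (i : ℕ∞) ∧ 1 ≤ i ∧ i ≤ N ∧ Tproc ξ η i ω = n ∧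
      (alphaProc ξ η n ω).toNat = i := by
  have hne : alphaProc ξ η n ω ≠ ⊤ := by
    intro htop; rw [htop] at h; simp at h
  obtain ⟨i, hi⟩ := WithTop.ne_top_iff_exists.mp hne
  have hprops := (alpha_eq_iff ξ η ω).mp hi.symm
  refine ⟨i, hi.symm, hprops.1.1, ?_, hprops.1.2, by rw [← hi]; exact ENat.toNat_coe i⟩
  rw [← hi] at h
  exact ENat.coe_le_coe.mp h

lemma beta_spec {n N : ℕ} (h : betaProc ξ η n ω ≤ N) :
    ∃ i : ℕ, betaProc ξ η n ω = (i : ℕ∞) ∧ 1 ≤ i ∧ i ≤ N ∧ Sproc ξ η i ω = n ∧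
      (betaProc ξ η n ω).toNat = i := by
  have hne : betaProc ξ η n ω ≠ ⊤ := by
    intro htop; rw [htop] at h; simp at h
  obtain ⟨i, hi⟩ := WithTop.ne_top_iff_exists.mp hne
  have hprops := (beta_eq_iff ξ η ω).mp hi.symm
  refine ⟨i, hi.symm, hprops.1.1, ?_, hprops.1.2, by rw [← hi]; exact ENat.toNat_coe i⟩
  rw [← hi] at h
  exact ENat.coe_le_coe.mp h

end Basic

def cF (r x : ℝ) : ℝ := if r = x then 2 else 0

lemma cF_nonneg (r x : ℝ) : 0 ≤ cF r x := by unfold cF; split <;> norm_num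
lemma cF_le_two (r x : ℝ) : cF r x ≤ 2 := by unfold cF; split <;> norm_num
lemma cF_eq_two {r x : ℝ} (h : r = x) : cF r x = 2 := if_pos h
lemma cF_eq_zero {r x : ℝ} (h : r ≠ x) : cF r x = 0 := if_neg h
lemma cF_add (x : ℝ) (hx : x = 1 ∨ x = -1) : cF 1 x + cF (-1) x = 2 := by
  rcases hx with rfl | rfl <;> norm_num [cF]

def gA (ξ η : ℕ → Ω → ℝ) (xv : ℕ → ℝ) (n N : ℕ) (ω : Ω) : ℝ :=
  ∏ i ∈ Finset.Icc 1 N, (if alphaProc ξ η n ω = (i : ℕ∞) then cF (ξ i ω) (xv n) else 1)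

def gB (ξ η : ℕ → Ω → ℝ) (yv : ℕ → ℝ) (m N : ℕ) (ω : Ω) : ℝ :=
  ∏ i ∈ Finset.Icc 1 N, (if betaProc ξ η m ω = (i : ℕ∞) then cF (ξ i ω) (yv m) else 1)

def WA (ξ η : ℕ → Ω → ℝ) (xv : ℕ → ℝ) (n N : ℕ) (ω : Ω) : ℝ :=
  if alphaProc ξ η n ω = ((N+1 : ℕ) : ℕ∞) then cF (ξ (N+1) ω) (xv n) else 1

def WB (ξ η : ℕ → Ω → ℝ) (yv : ℕ → ℝ) (m N : ℕ) (ω : Ω) : ℝ :=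
  if betaProc ξ η m ω = ((N+1 : ℕ) : ℕ∞) then cF (ξ (N+1) ω) (yv m) else 1

def Zproc (ξ η : ℕ → Ω → ℝ) (xv yv : ℕ → ℝ) (NS MS : Finset ℕ) (N : ℕ) (ω : Ω) : ℝ :=
  (∏ n ∈ NS, gA ξ η xv n N ω) * (∏ m ∈ MS, gB ξ η yv m N ω)

def Wstep (ξ η : ℕ → Ω → ℝ) (xv yv : ℕ → ℝ) (NS MS : Finset ℕ) (N : ℕ) (ω : Ω) : ℝ :=
  (∏ n ∈ NS, WA ξ η xv n N ω) * (∏ m ∈ MS, WB ξ η yv m N ω)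

section AlgA
variable (ξ η : ℕ → Ω → ℝ) (xv yv : ℕ → ℝ) (ω : Ω)

lemma gA_zero (n : ℕ) : gA ξ η xv n 0 ω = 1 := by simp [gA]

lemma gB_zero (m : ℕ) : gB ξ η yv m 0 ω = 1 := by simp [gB]

lemma gA_succ (n N : ℕ) : gA ξ η xv n (N+1) ω = gA ξ η xv n N ω * WA ξ η xv n N ω := by
  unfold gA WA
  rw [← Finset.prod_Icc_succ_top (by omega : 1 ≤ N + 1)]

lemma gB_succ (m N : ℕ) : gB ξ η yv m (N+1) ω = gB ξ η yv m N ω * WB ξ η yv m N ω := by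
  unfold gB WB
  rw [← Finset.prod_Icc_succ_top (by omega : 1 ≤ N + 1)]

lemma gA_of_not_le {n N : ℕ} (h : ¬ alphaProc ξ η n ω ≤ N) : gA ξ η xv n N ω = 1 := by
  apply Finset.prod_eq_one
  intro i hi
  rw [if_neg]
  intro heq
  exact h (heq.le.trans (by exact_mod_cast (Finset.mem_Icc.mp hi).2))

lemma gB_of_not_le {m N : ℕ} (h : ¬ betaProc ξ η m ω ≤ N) : gB ξ η yv m N ω = 1 := by
  apply Finset.prod_eq_one
  intro i hi
  rw [if_neg]
  intro heq
  exact h (heq.le.trans (by exact_mod_cast (Finset.mem_Icc.mp hi).2))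

lemma gA_of_le {n N : ℕ} (h : alphaProc ξ η n ω ≤ N) :
    gA ξ η xv n N ω = cF (ξ (alphaProc ξ η n ω).toNat ω) (xv n) := by
  obtain ⟨i, hi, hi1, hiN, -, htn⟩ := alpha_spec ξ η ω h
  have hfac : ∀ j ∈ Finset.Icc 1 N, j ≠ i →
      (if alphaProc ξ η n ω = (j : ℕ∞) then cF (ξ j ω) (xv n) else 1) = 1 := by
    intro j hj hji
    apply if_neg
    rw [hi]
    intro hc
    exact hji (Nat.cast_injective hc).symm
  rw [htn, gA, Finset.prod_eq_single_of_mem i (Finset.mem_Icc.mpr ⟨hi1, hiN⟩) hfac, if_pos hi]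

lemma gB_of_le {m N : ℕ} (h : betaProc ξ η m ω ≤ N) :
    gB ξ η yv m N ω = cF (ξ (betaProc ξ η m ω).toNat ω) (yv m) := by
  obtain ⟨i, hi, hi1, hiN, -, htn⟩ := beta_spec ξ η ω h
  have hfac : ∀ j ∈ Finset.Icc 1 N, j ≠ i →
      (if betaProc ξ η m ω = (j : ℕ∞) then cF (ξ j ω) (yv m) else 1) = 1 := by
    intro j hj hji
    apply if_neg
    rw [hi]
    intro hc
    exact hji (Nat.cast_injective hc).symm
  rw [htn, gB, Finset.prod_eq_single_of_mem i (Finset.mem_Icc.mpr ⟨hi1, hiN⟩) hfac, if_pos hi]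

lemma gA_nonneg (n N : ℕ) : 0 ≤ gA ξ η xv n N ω := by
  by_cases h : alphaProc ξ η n ω ≤ N
  · rw [gA_of_le _ _ _ _ h]; exact cF_nonneg _ _
  · rw [gA_of_not_le _ _ _ _ h]; norm_num

lemma gA_le_two (n N : ℕ) : gA ξ η xv n N ω ≤ 2 := by
  by_cases h : alphaProc ξ η n ω ≤ N
  · rw [gA_of_le _ _ _ _ h]; exact cF_le_two _ _
  · rw [gA_of_not_le _ _ _ _ h]; norm_num

lemma gB_nonneg (m N : ℕ) : 0 ≤ gB ξ η yv m N ω := by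
  by_cases h : betaProc ξ η m ω ≤ N
  · rw [gB_of_le _ _ _ _ h]; exact cF_nonneg _ _
  · rw [gB_of_not_le _ _ _ _ h]; norm_num

lemma gB_le_two (m N : ℕ) : gB ξ η yv m N ω ≤ 2 := by
  by_cases h : betaProc ξ η m ω ≤ N
  · rw [gB_of_le _ _ _ _ h]; exact cF_le_two _ _
  · rw [gB_of_not_le _ _ _ _ h]; norm_num

variable (NS MS : Finset ℕ)

lemma Z_zero : Zproc ξ η xv yv NS MS 0 ω = 1 := by
  simp [Zproc, gA_zero, gB_zero]

lemma Z_succ (N : ℕ) : Zproc ξ η xv yv NS MS (N+1) ω =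
    Zproc ξ η xv yv NS MS N ω * Wstep ξ η xv yv NS MS N ω := by
  unfold Zproc Wstep
  simp only [gA_succ, gB_succ, Finset.prod_mul_distrib]
  ring

lemma Z_nonneg (N : ℕ) : 0 ≤ Zproc ξ η xv yv NS MS N ω := by
  apply mul_nonneg <;> exact Finset.prod_nonneg fun i _ => by
    first
      | exact gA_nonneg ξ η xv ω i N
      | exact gB_nonneg ξ η yv ω i N

lemma Z_le (N : ℕ) : Zproc ξ η xv yv NS MS N ω ≤ 2 ^ (NS.card + MS.card) := by
  have h1 : (∏ n ∈ NS, gA ξ η xv n N ω) ≤ 2 ^ NS.card := by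
    calc (∏ n ∈ NS, gA ξ η xv n N ω) ≤ ∏ n ∈ NS, (2:ℝ) :=
      Finset.prod_le_prod (fun i _ => gA_nonneg ξ η xv ω i N) (fun i _ => gA_le_two ξ η xv ω i N)
    _ = 2 ^ NS.card := by rw [Finset.prod_const]
  have h2 : (∏ m ∈ MS, gB ξ η yv m N ω) ≤ 2 ^ MS.card := by
    calc (∏ m ∈ MS, gB ξ η yv m N ω) ≤ ∏ m ∈ MS, (2:ℝ) :=
      Finset.prod_le_prod (fun i _ => gB_nonneg ξ η yv ω i N) (fun i _ => gB_le_two ξ η yv ω i N)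
    _ = 2 ^ MS.card := by rw [Finset.prod_const]
  rw [pow_add]
  exact mul_le_mul h1 h2 (Finset.prod_nonneg fun i _ => gB_nonneg ξ η yv ω i N) (by positivity)

end AlgA

section Wst
variable (ξ η : ℕ → Ω → ℝ) (xv yv : ℕ → ℝ) (NS MS : Finset ℕ) (ω : Ω)

lemma Wstep_eq (hNS : ∀ n ∈ NS, 1 ≤ n) (hMS : ∀ m ∈ MS, 1 ≤ m) (N : ℕ) :
    Wstep ξ η xv yv NS MS N ω =
      if ξ (N+1) ω = η (N+1) ω then
        (if Tproc ξ η N ω + 1 ∈ NS then cF (ξ (N+1) ω) (xv (Tproc ξ η N ω + 1)) else 1)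
      else
        (if Sproc ξ η N ω + 1 ∈ MS then cF (ξ (N+1) ω) (yv (Sproc ξ η N ω + 1)) else 1) := by
  by_cases hq : ξ (N+1) ω = η (N+1) ω
  · have hQ1 : Qproc ξ η (N+1) ω = 1 := if_pos hq
    have hWA : ∀ n ∈ NS, WA ξ η xv n N ω =
        if Tproc ξ η N ω + 1 = n then cF (ξ (N+1) ω) (xv n) else 1 := by
      intro n hn
      unfold WA
      by_cases h : Tproc ξ η N ω + 1 = n
      · rw [if_pos h, if_pos ((alpha_eq_succ_iff ξ η ω (hNS n hn)).mpr ⟨hQ1, h⟩)]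
      · rw [if_neg h, if_neg]
        intro hc
        exact h ((alpha_eq_succ_iff ξ η ω (hNS n hn)).mp hc).2
    have hWB : ∀ m ∈ MS, WB ξ η yv m N ω = 1 := by
      intro m hm
      unfold WB
      rw [if_neg]
      intro hc
      have := ((beta_eq_succ_iff ξ η ω (hMS m hm)).mp hc).1
      omega
    rw [if_pos hq]
    unfold Wstep
    rw [Finset.prod_congr rfl hWA, Finset.prod_eq_one hWB, mul_one, Finset.prod_ite_eq]
  · have hQ0 : Qproc ξ η (N+1) ω = 0 := if_neg hq
    have hWB : ∀ m ∈ MS, WB ξ η yv m N ω =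
        if Sproc ξ η N ω + 1 = m then cF (ξ (N+1) ω) (yv m) else 1 := by
      intro m hm
      unfold WB
      by_cases h : Sproc ξ η N ω + 1 = m
      · rw [if_pos h, if_pos ((beta_eq_succ_iff ξ η ω (hMS m hm)).mpr ⟨hQ0, h⟩)]
      · rw [if_neg h, if_neg]
        intro hc
        exact h ((beta_eq_succ_iff ξ η ω (hMS m hm)).mp hc).2
    have hWA : ∀ n ∈ NS, WA ξ η xv n N ω = 1 := by
      intro n hn
      unfold WA
      rw [if_neg]
      intro hc
      have := ((alpha_eq_succ_iff ξ η ω (hNS n hn)).mp hc).1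
      omega
    rw [if_neg hq]
    unfold Wstep
    rw [Finset.prod_congr rfl hWB, Finset.prod_eq_one hWA, one_mul, Finset.prod_ite_eq]

lemma WA_nonneg (n N : ℕ) : 0 ≤ WA ξ η xv n N ω := by
  unfold WA
  split
  · exact cF_nonneg _ _
  · norm_num

lemma WA_le_two (n N : ℕ) : WA ξ η xv n N ω ≤ 2 := by
  unfold WA
  split
  · exact cF_le_two _ _
  · norm_num

lemma WB_nonneg (m N : ℕ) : 0 ≤ WB ξ η yv m N ω := by
  unfold WB
  split
  · exact cF_nonneg _ _
  · norm_num

lemma WB_le_two (m N : ℕ) : WB ξ η yv m N ω ≤ 2 := by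
  unfold WB
  split
  · exact cF_le_two _ _
  · norm_num

lemma Wstep_nonneg (N : ℕ) : 0 ≤ Wstep ξ η xv yv NS MS N ω :=
  mul_nonneg (Finset.prod_nonneg fun i _ => WA_nonneg ξ η xv ω i N)
    (Finset.prod_nonneg fun i _ => WB_nonneg ξ η yv ω i N)

lemma Wstep_le (N : ℕ) : Wstep ξ η xv yv NS MS N ω ≤ 2 ^ (NS.card + MS.card) := by
  have h1 : ∀ n ∈ NS, WA ξ η xv n N ω ≤ 2 := fun n _ => WA_le_two ξ η xv ω n N
  have h2 : ∀ m ∈ MS, WB ξ η yv m N ω ≤ 2 := fun m _ => WB_le_two ξ η yv ω m N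
  have hn1 : ∀ n ∈ NS, 0 ≤ WA ξ η xv n N ω := fun n _ => WA_nonneg ξ η xv ω n N
  have hn2 : ∀ m ∈ MS, 0 ≤ WB ξ η yv m N ω := fun m _ => WB_nonneg ξ η yv ω m N
  rw [pow_add]
  refine mul_le_mul ?_ ?_ (Finset.prod_nonneg hn2) (by positivity)
  · calc (∏ n ∈ NS, WA ξ η xv n N ω) ≤ ∏ n ∈ NS, (2:ℝ) := Finset.prod_le_prod hn1 h1
      _ = 2 ^ NS.card := by rw [Finset.prod_const]
  · calc (∏ m ∈ MS, WB ξ η yv m N ω) ≤ ∏ m ∈ MS, (2:ℝ) := Finset.prod_le_prod hn2 h2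
      _ = 2 ^ MS.card := by rw [Finset.prod_const]

def Climit (ω : Ω) : ℝ :=
  (∏ n ∈ NS, cF (ξ (alphaProc ξ η n ω).toNat ω) (xv n)) *
  (∏ m ∈ MS, cF (ξ (betaProc ξ η m ω).toNat ω) (yv m))

lemma Z_tendsto (hA : ∀ n ∈ NS, alphaProc ξ η n ω ≠ ⊤)
    (hB : ∀ m ∈ MS, betaProc ξ η m ω ≠ ⊤) :
    Tendsto (fun N => Zproc ξ η xv yv NS MS N ω) atTop
      (nhds (Climit ξ η xv yv NS MS ω)) := by
  set N₀ := (NS.sup fun n => (alphaProc ξ η n ω).toNat) ⊔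
      (MS.sup fun m => (betaProc ξ η m ω).toNat) with hN₀
  have key : ∀ N ≥ N₀, Zproc ξ η xv yv NS MS N ω = Climit ξ η xv yv NS MS ω := by
    intro N hN
    unfold Zproc Climit
    have hAle : ∀ n ∈ NS, alphaProc ξ η n ω ≤ N := by
      intro n hn
      rw [← ENat.coe_toNat (hA n hn)]
      exact_mod_cast le_trans (le_trans (Finset.le_sup hn) le_sup_left) hN
    have hBle : ∀ m ∈ MS, betaProc ξ η m ω ≤ N := by
      intro m hm
      rw [← ENat.coe_toNat (hB m hm)]
      exact_mod_cast le_trans (le_trans (Finset.le_sup hm) le_sup_right) hN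
    rw [Finset.prod_congr rfl fun n hn => gA_of_le ξ η xv ω (hAle n hn),
        Finset.prod_congr rfl fun m hm => gB_of_le ξ η yv ω (hBle m hm)]
  refine Tendsto.congr' ?_ tendsto_const_nhds
  filter_upwards [eventually_ge_atTop N₀] with N hN
  exact (key N hN).symm

lemma Climit_eq :
    Climit ξ η xv yv NS MS ω =
      if (∀ n ∈ NS, ξ (alphaProc ξ η n ω).toNat ω = xv n) ∧
         (∀ m ∈ MS, ξ (betaProc ξ η m ω).toNat ω = yv m)
      then 2 ^ (NS.card + MS.card) else 0 := by
  unfold Climit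
  split
  · rename_i h
    rw [Finset.prod_congr rfl fun n hn => cF_eq_two (h.1 n hn),
        Finset.prod_congr rfl fun m hm => cF_eq_two (h.2 m hm)]
    simp [pow_add]
  · rename_i h
    rw [not_and_or] at h
    rcases h with h | h
    · push_neg at h
      obtain ⟨n, hn, hne⟩ := h
      rw [Finset.prod_eq_zero hn (cF_eq_zero hne), zero_mul]
    · push_neg at h
      obtain ⟨m, hm, hne⟩ := h
      rw [Finset.prod_eq_zero hm (cF_eq_zero hne), mul_zero]

end Wst


variable {mΩ : MeasurableSpace Ω}

section Meas
variable (F : MeasureTheory.Filtration ℕ mΩ) (ξ η : ℕ → Ω → ℝ)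
  (hξm : ∀ n, 1 ≤ n → Measurable[F n] (ξ n))
  (hηm : ∀ n, 1 ≤ n → Measurable[F n] (η n))

include hξm hηm

lemma Q_meas {k : ℕ} (hk : 1 ≤ k) : Measurable[F k] fun ω => Qproc ξ η k ω := by
  unfold Qproc
  exact Measurable.ite (measurableSet_eq_fun (hξm k hk) (hηm k hk))
    measurable_const measurable_const

lemma T_meas (N : ℕ) : Measurable[F N] fun ω => Tproc ξ η N ω := by
  unfold Tproc
  apply Finset.measurable_sum
  intro k hk
  have hk' := Finset.mem_Icc.mp hk
  exact (Q_meas F ξ η hξm hηm hk'.1).mono (F.mono hk'.2) le_rfl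

lemma S_meas (N : ℕ) : Measurable[F N] fun ω => Sproc ξ η N ω := by
  unfold Sproc
  exact Measurable.sub measurable_const (T_meas F ξ η hξm hηm N)

lemma TEq_meas {k n N : ℕ} (hk : k ≤ N) : MeasurableSet[F N] {ω | Tproc ξ η k ω = n} :=
  ((T_meas F ξ η hξm hηm k).mono (F.mono hk) le_rfl) (measurableSet_singleton n)

lemma alphaEq_meas {n i N : ℕ} (hiN : i ≤ N) :
    MeasurableSet[F N] {ω | alphaProc ξ η n ω = (i : ℕ∞)} := by
  rcases Nat.eq_zero_or_pos i with rfl | hi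
  · have : {ω | alphaProc ξ η n ω = ((0:ℕ) : ℕ∞)} = ∅ := by
      ext ω
      simp only [mem_setOf_eq, mem_empty_iff_false, iff_false]
      intro h
      have := ((alpha_eq_iff ξ η ω).mp h).1.1
      omega
    rw [this]
    exact @MeasurableSet.empty Ω (F N)
  · have hset : {ω | alphaProc ξ η n ω = (i : ℕ∞)} =
        {ω | Tproc ξ η i ω = n} ∩ ⋂ k ∈ Finset.Ico 1 i, {ω | Tproc ξ η k ω ≠ n} := by
      ext ω
      simp only [mem_setOf_eq, mem_inter_iff, mem_iInter, Finset.mem_Ico]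
      rw [alpha_eq_iff]
      constructor
      · rintro ⟨⟨-, h1⟩, h2⟩
        exact ⟨h1, fun k hk => fun hc => h2 k hk.2 ⟨hk.1, hc⟩⟩
      · rintro ⟨h1, h2⟩
        exact ⟨⟨hi, h1⟩, fun k hk ⟨hk1, hc⟩ => h2 k ⟨hk1, hk⟩ hc⟩
    rw [hset]
    refine (TEq_meas F ξ η hξm hηm hiN).inter ?_
    refine MeasurableSet.biInter (Finset.Ico 1 i).countable_toSet fun k hk => ?_
    have hk' := Finset.mem_Ico.mp hk
    exact (TEq_meas F ξ η hξm hηm (by omega)).compl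

lemma SEq_meas {k n N : ℕ} (hk : k ≤ N) : MeasurableSet[F N] {ω | Sproc ξ η k ω = n} :=
  ((S_meas F ξ η hξm hηm k).mono (F.mono hk) le_rfl) (measurableSet_singleton n)

lemma betaEq_meas {n i N : ℕ} (hiN : i ≤ N) :
    MeasurableSet[F N] {ω | betaProc ξ η n ω = (i : ℕ∞)} := by
  rcases Nat.eq_zero_or_pos i with rfl | hi
  · have : {ω | betaProc ξ η n ω = ((0:ℕ) : ℕ∞)} = ∅ := by
      ext ω
      simp only [mem_setOf_eq, mem_empty_iff_false, iff_false]
      intro h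
      have := ((beta_eq_iff ξ η ω).mp h).1.1
      omega
    rw [this]
    exact @MeasurableSet.empty Ω (F N)
  · have hset : {ω | betaProc ξ η n ω = (i : ℕ∞)} =
        {ω | Sproc ξ η i ω = n} ∩ ⋂ k ∈ Finset.Ico 1 i, {ω | Sproc ξ η k ω ≠ n} := by
      ext ω
      simp only [mem_setOf_eq, mem_inter_iff, mem_iInter, Finset.mem_Ico]
      rw [beta_eq_iff]
      constructor
      · rintro ⟨⟨-, h1⟩, h2⟩
        exact ⟨h1, fun k hk => fun hc => h2 k hk.2 ⟨hk.1, hc⟩⟩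
      · rintro ⟨h1, h2⟩
        exact ⟨⟨hi, h1⟩, fun k hk ⟨hk1, hc⟩ => h2 k ⟨hk1, hk⟩ hc⟩
    rw [hset]
    refine (SEq_meas F ξ η hξm hηm hiN).inter ?_
    refine MeasurableSet.biInter (Finset.Ico 1 i).countable_toSet fun k hk => ?_
    have hk' := Finset.mem_Ico.mp hk
    exact (SEq_meas F ξ η hξm hηm (by omega)).compl

variable (xv yv : ℕ → ℝ)

lemma gA_meas (n N : ℕ) : Measurable[F N] (gA ξ η xv n N) := by
  unfold gA
  apply Finset.measurable_prod
  intro i hi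
  have hi' := Finset.mem_Icc.mp hi
  refine Measurable.ite (alphaEq_meas F ξ η hξm hηm hi'.2) ?_ measurable_const
  unfold cF
  exact Measurable.ite
    (((hξm i hi'.1).mono (F.mono hi'.2) le_rfl) (measurableSet_singleton (xv n)))
    measurable_const measurable_const

lemma gB_meas (m N : ℕ) : Measurable[F N] (gB ξ η yv m N) := by
  unfold gB
  apply Finset.measurable_prod
  intro i hi
  have hi' := Finset.mem_Icc.mp hi
  refine Measurable.ite (betaEq_meas F ξ η hξm hηm hi'.2) ?_ measurable_const
  unfold cF
  exact Measurable.ite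
    (((hξm i hi'.1).mono (F.mono hi'.2) le_rfl) (measurableSet_singleton (yv m)))
    measurable_const measurable_const

lemma Z_meas (NS MS : Finset ℕ) (N : ℕ) : Measurable[F N] (Zproc ξ η xv yv NS MS N) := by
  unfold Zproc
  exact Measurable.mul
    (Finset.measurable_prod _ fun n _ => gA_meas F ξ η hξm hηm xv n N)
    (Finset.measurable_prod _ fun m _ => gB_meas F ξ η hξm hηm yv m N)

lemma W_meas (NS MS : Finset ℕ) (N : ℕ) :
    Measurable[F (N+1)] (Wstep ξ η xv yv NS MS N) := by
  unfold Wstep WA WB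
  refine Measurable.mul (Finset.measurable_prod _ fun n _ => ?_)
    (Finset.measurable_prod _ fun m _ => ?_)
  · refine Measurable.ite (alphaEq_meas F ξ η hξm hηm le_rfl) ?_ measurable_const
    unfold cF
    exact Measurable.ite ((hξm (N+1) (by omega)) (measurableSet_singleton (xv n)))
      measurable_const measurable_const
  · refine Measurable.ite (betaEq_meas F ξ η hξm hηm le_rfl) ?_ measurable_const
    unfold cF
    exact Measurable.ite ((hξm (N+1) (by omega)) (measurableSet_singleton (yv m)))
      measurable_const measurable_const

end Meas

lemma integrable_of_bdd {P : Measure Ω} [IsProbabilityMeasure P] {f : Ω → ℝ} {C : ℝ}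
    (hf : AEStronglyMeasurable f P) (h : ∀ ω, |f ω| ≤ C) : Integrable f P :=
  Integrable.mono' (integrable_const C) hf (ae_of_all _ h)

section Central
variable {P : Measure Ω} [IsProbabilityMeasure P] (F : MeasureTheory.Filtration ℕ mΩ)
  {ξ η : ℕ → Ω → ℝ}

lemma marginal_half (i : ℕ) {B : Set Ω} (hB : MeasurableSet[F (i-1)] B)
    {C : Set Ω} (hC : MeasurableSet C)
    (hcond : P[C.indicator (fun _ => (1:ℝ)) | F (i-1)] =ᵐ[P] fun _ => 1/2) :
    (P (B ∩ C)).toReal = (P B).toReal / 2 := by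
  have hBm : MeasurableSet B := F.le _ _ hB
  have hint : Integrable (C.indicator fun _ => (1:ℝ)) P := (integrable_const 1).indicator hC
  have h1 : ∫ ω in B, C.indicator (fun _ => (1:ℝ)) ω ∂P
      = ∫ ω in B, (P[C.indicator (fun _ => (1:ℝ)) | F (i-1)]) ω ∂P :=
    (setIntegral_condExp (F.le (i-1)) hint hB).symm
  have h2 : ∫ ω in B, (P[C.indicator (fun _ => (1:ℝ)) | F (i-1)]) ω ∂P
      = ∫ _ω in B, (1/2 : ℝ) ∂P :=
    setIntegral_congr_ae hBm (hcond.mono fun ω hω _ => hω)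
  rw [setIntegral_indicator hC, setIntegral_const] at h1
  rw [setIntegral_const] at h2
  rw [h2] at h1
  simp only [smul_eq_mul, mul_one] at h1
  rw [measureReal_def, measureReal_def] at h1
  rw [h1]
  ring

variable (hξm : ∀ n, 1 ≤ n → Measurable[F n] (ξ n))
  (hηm : ∀ n, 1 ≤ n → Measurable[F n] (η n))
  (hξv : ∀ n ω, ξ n ω = 1 ∨ ξ n ω = -1)
  (hηv : ∀ n ω, η n ω = 1 ∨ η n ω = -1)
  (hhalf : ∀ n, 1 ≤ n →
      (P[({ω | ξ n ω = 1}).indicator (fun _ => (1 : ℝ)) | F (n - 1)] =ᵐ[P] fun _ => 1 / 2) ∧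
      (P[({ω | ξ n ω = -1}).indicator (fun _ => (1 : ℝ)) | F (n - 1)] =ᵐ[P] fun _ => 1 / 2) ∧
      (P[({ω | η n ω = 1}).indicator (fun _ => (1 : ℝ)) | F (n - 1)] =ᵐ[P] fun _ => 1 / 2) ∧
      (P[({ω | η n ω = -1}).indicator (fun _ => (1 : ℝ)) | F (n - 1)] =ᵐ[P] fun _ => 1 / 2))

include hξm hηm hξv hηv hhalf

lemma central_integral (i : ℕ) (hi : 1 ≤ i) {B : Set Ω} (hB : MeasurableSet[F (i-1)] B)
    (g : ℝ → ℝ → ℝ) (hg1 : g 1 1 + g (-1) (-1) = 2) (hg2 : g 1 (-1) + g (-1) 1 = 2) :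
    ∫ ω in B, g (ξ i ω) (η i ω) ∂P = (P B).toReal := by
  obtain ⟨hx1, hxm1, he1, hem1⟩ := hhalf i hi
  have hBm : MeasurableSet B := F.le _ _ hB
  have hxM : Measurable (ξ i) := (hξm i hi).mono (F.le i) le_rfl
  have hyM : Measurable (η i) := (hηm i hi).mono (F.le i) le_rfl
  have mx1 : MeasurableSet {ω | ξ i ω = 1} := hxM (measurableSet_singleton 1)
  have mxm : MeasurableSet {ω | ξ i ω = -1} := hxM (measurableSet_singleton (-1))
  have my1 : MeasurableSet {ω | η i ω = 1} := hyM (measurableSet_singleton 1)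
  have mym : MeasurableSet {ω | η i ω = -1} := hyM (measurableSet_singleton (-1))
  set C11 : Set Ω := {ω | ξ i ω = 1} ∩ {ω | η i ω = 1} with hC11
  set C1m : Set Ω := {ω | ξ i ω = 1} ∩ {ω | η i ω = -1} with hC1m
  set Cm1 : Set Ω := {ω | ξ i ω = -1} ∩ {ω | η i ω = 1} with hCm1
  set Cmm : Set Ω := {ω | ξ i ω = -1} ∩ {ω | η i ω = -1} with hCmm
  have m11 : MeasurableSet C11 := mx1.inter my1
  have m1m : MeasurableSet C1m := mx1.inter mym
  have mm1 : MeasurableSet Cm1 := mxm.inter my1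
  have mmm : MeasurableSet Cmm := mxm.inter mym
  set p : ℝ := (P B).toReal with hp
  set a : ℝ := (P (B ∩ C11)).toReal with ha
  set b : ℝ := (P (B ∩ C1m)).toReal with hb
  set c : ℝ := (P (B ∩ Cm1)).toReal with hc
  set d : ℝ := (P (B ∩ Cmm)).toReal with hd
  have hsplit : ∀ (U V W : Set Ω), MeasurableSet V → MeasurableSet W →
      U = V ∪ W → Disjoint V W → (P U).toReal = (P V).toReal + (P W).toReal := by
    intro U V W hV hW hUVW hdisj
    rw [hUVW, measure_union hdisj hW, ENNReal.toReal_add (measure_ne_top P V) (measure_ne_top P W)]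
  have hdis1 : Disjoint (B ∩ C11) (B ∩ C1m) := by
    rw [Set.disjoint_left]
    rintro ω ⟨-, -, h1⟩ ⟨-, -, h2⟩
    simp only [mem_setOf_eq] at h1 h2
    norm_num [h1] at h2
  have hdis2 : Disjoint (B ∩ Cm1) (B ∩ Cmm) := by
    rw [Set.disjoint_left]
    rintro ω ⟨-, -, h1⟩ ⟨-, -, h2⟩
    simp only [mem_setOf_eq] at h1 h2
    norm_num [h1] at h2
  have hdis3 : Disjoint (B ∩ C11) (B ∩ Cm1) := by
    rw [Set.disjoint_left]
    rintro ω ⟨-, h1, -⟩ ⟨-, h2, -⟩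
    simp only [mem_setOf_eq] at h1 h2
    norm_num [h1] at h2
  have hdis4 : Disjoint (B ∩ C1m) (B ∩ Cmm) := by
    rw [Set.disjoint_left]
    rintro ω ⟨-, h1, -⟩ ⟨-, h2, -⟩
    simp only [mem_setOf_eq] at h1 h2
    norm_num [h1] at h2
  have s1 : a + b = p / 2 := by
    rw [ha, hb, ← hsplit (B ∩ {ω | ξ i ω = 1}) _ _ (hBm.inter m11) (hBm.inter m1m) ?_ hdis1]
    · exact marginal_half F i hB mx1 hx1
    · ext ω
      constructor
      · rintro ⟨hω, hx⟩
        rcases hηv i ω with hy | hy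
        · exact Or.inl ⟨hω, hx, hy⟩
        · exact Or.inr ⟨hω, hx, hy⟩
      · rintro (⟨hω, hx, -⟩ | ⟨hω, hx, -⟩) <;> exact ⟨hω, hx⟩
  have s2 : c + d = p / 2 := by
    rw [hc, hd, ← hsplit (B ∩ {ω | ξ i ω = -1}) _ _ (hBm.inter mm1) (hBm.inter mmm) ?_ hdis2]
    · exact marginal_half F i hB mxm hxm1
    · ext ω
      constructor
      · rintro ⟨hω, hx⟩
        rcases hηv i ω with hy | hy
        · exact Or.inl ⟨hω, hx, hy⟩
        · exact Or.inr ⟨hω, hx, hy⟩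
      · rintro (⟨hω, hx, -⟩ | ⟨hω, hx, -⟩) <;> exact ⟨hω, hx⟩
  have s3 : a + c = p / 2 := by
    rw [ha, hc, ← hsplit (B ∩ {ω | η i ω = 1}) _ _ (hBm.inter m11) (hBm.inter mm1) ?_ hdis3]
    · exact marginal_half F i hB my1 he1
    · ext ω
      constructor
      · rintro ⟨hω, hy⟩
        rcases hξv i ω with hx | hx
        · exact Or.inl ⟨hω, hx, hy⟩
        · exact Or.inr ⟨hω, hx, hy⟩
      · rintro (⟨hω, -, hy⟩ | ⟨hω, -, hy⟩) <;> exact ⟨hω, hy⟩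
  have s4 : b + d = p / 2 := by
    rw [hb, hd, ← hsplit (B ∩ {ω | η i ω = -1}) _ _ (hBm.inter m1m) (hBm.inter mmm) ?_ hdis4]
    · exact marginal_half F i hB mym hem1
    · ext ω
      constructor
      · rintro ⟨hω, hy⟩
        rcases hξv i ω with hx | hx
        · exact Or.inl ⟨hω, hx, hy⟩
        · exact Or.inr ⟨hω, hx, hy⟩
      · rintro (⟨hω, -, hy⟩ | ⟨hω, -, hy⟩) <;> exact ⟨hω, hy⟩
  have hda : d = a := by linarith
  have hcb : c = b := by linarith
  have hpt : ∀ ω, g (ξ i ω) (η i ω) =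
      g 1 1 * C11.indicator (fun _ => (1:ℝ)) ω + g 1 (-1) * C1m.indicator (fun _ => (1:ℝ)) ω +
      g (-1) 1 * Cm1.indicator (fun _ => (1:ℝ)) ω +
      g (-1) (-1) * Cmm.indicator (fun _ => (1:ℝ)) ω := by
    intro ω
    rcases hξv i ω with hx | hx <;> rcases hηv i ω with hy | hy <;>
      simp [hC11, hC1m, hCm1, hCmm, Set.indicator_apply, Set.mem_inter_iff, mem_setOf_eq,
        hx, hy] <;> norm_num
  have hII : ∀ (C : Set Ω), MeasurableSet C →
      ∫ ω in B, C.indicator (fun _ => (1:ℝ)) ω ∂P = (P (B ∩ C)).toReal := by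
    intro C hC
    rw [setIntegral_indicator hC, setIntegral_const, smul_eq_mul, mul_one, measureReal_def]
  have hIint : ∀ (C : Set Ω), MeasurableSet C → (r : ℝ) →
      Integrable (fun ω => r * C.indicator (fun _ => (1:ℝ)) ω) (P.restrict B) := by
    intro C hC r
    exact (((integrable_const (1:ℝ)).indicator hC).integrableOn).const_mul r
  set t1 : Ω → ℝ := fun ω => g 1 1 * C11.indicator (fun _ => (1:ℝ)) ω with ht1
  set t2 : Ω → ℝ := fun ω => g 1 (-1) * C1m.indicator (fun _ => (1:ℝ)) ω with ht2
  set t3 : Ω → ℝ := fun ω => g (-1) 1 * Cm1.indicator (fun _ => (1:ℝ)) ω with ht3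
  set t4 : Ω → ℝ := fun ω => g (-1) (-1) * Cmm.indicator (fun _ => (1:ℝ)) ω with ht4
  have i1 : Integrable t1 (P.restrict B) := hIint _ m11 _
  have i2 : Integrable t2 (P.restrict B) := hIint _ m1m _
  have i3 : Integrable t3 (P.restrict B) := hIint _ mm1 _
  have i4 : Integrable t4 (P.restrict B) := hIint _ mmm _
  have e4 : ∫ ω in B, (t1 ω + t2 ω + t3 ω + t4 ω) ∂P
      = (∫ ω in B, (t1 ω + t2 ω + t3 ω) ∂P) + ∫ ω in B, t4 ω ∂P :=
    integral_add ((i1.add i2).add i3) i4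
  have e3 : ∫ ω in B, (t1 ω + t2 ω + t3 ω) ∂P
      = (∫ ω in B, (t1 ω + t2 ω) ∂P) + ∫ ω in B, t3 ω ∂P :=
    integral_add (i1.add i2) i3
  have e2 : ∫ ω in B, (t1 ω + t2 ω) ∂P
      = (∫ ω in B, t1 ω ∂P) + ∫ ω in B, t2 ω ∂P :=
    integral_add i1 i2
  have v1 : ∫ ω in B, t1 ω ∂P = g 1 1 * a := by
    simp only [ht1]
    rw [integral_const_mul, hII _ m11]
  have v2 : ∫ ω in B, t2 ω ∂P = g 1 (-1) * b := by
    simp only [ht2]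
    rw [integral_const_mul, hII _ m1m]
  have v3 : ∫ ω in B, t3 ω ∂P = g (-1) 1 * c := by
    simp only [ht3]
    rw [integral_const_mul, hII _ mm1]
  have v4 : ∫ ω in B, t4 ω ∂P = g (-1) (-1) * d := by
    simp only [ht4]
    rw [integral_const_mul, hII _ mmm]
  calc ∫ ω in B, g (ξ i ω) (η i ω) ∂P
      = ∫ ω in B, (t1 ω + t2 ω + t3 ω + t4 ω) ∂P :=
        setIntegral_congr_fun hBm fun ω _ => hpt ω
    _ = g 1 1 * a + g 1 (-1) * b + g (-1) 1 * c + g (-1) (-1) * d := by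
        rw [e4, e3, e2, v1, v2, v3, v4]
    _ = p := by linear_combination a * hg1 + b * hg2 + g (-1) (-1) * hda + g (-1) 1 * hcb + 2 * s1
end Central

section Induct
variable {P : Measure Ω} [IsProbabilityMeasure P] (F : MeasureTheory.Filtration ℕ mΩ)
  {ξ η : ℕ → Ω → ℝ}
  (hξm : ∀ n, 1 ≤ n → Measurable[F n] (ξ n))
  (hηm : ∀ n, 1 ≤ n → Measurable[F n] (η n))
  (hξv : ∀ n ω, ξ n ω = 1 ∨ ξ n ω = -1)
  (hηv : ∀ n ω, η n ω = 1 ∨ η n ω = -1)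
  (hhalf : ∀ n, 1 ≤ n →
      (P[({ω | ξ n ω = 1}).indicator (fun _ => (1 : ℝ)) | F (n - 1)] =ᵐ[P] fun _ => 1 / 2) ∧
      (P[({ω | ξ n ω = -1}).indicator (fun _ => (1 : ℝ)) | F (n - 1)] =ᵐ[P] fun _ => 1 / 2) ∧
      (P[({ω | η n ω = 1}).indicator (fun _ => (1 : ℝ)) | F (n - 1)] =ᵐ[P] fun _ => 1 / 2) ∧
      (P[({ω | η n ω = -1}).indicator (fun _ => (1 : ℝ)) | F (n - 1)] =ᵐ[P] fun _ => 1 / 2))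
  (xv yv : ℕ → ℝ) (hxv : ∀ n, xv n = 1 ∨ xv n = -1) (hyv : ∀ m, yv m = 1 ∨ yv m = -1)
  (NS MS : Finset ℕ) (hNS : ∀ n ∈ NS, 1 ≤ n) (hMS : ∀ m ∈ MS, 1 ≤ m)

include hξm hηm hξv hηv hhalf hxv hyv hNS hMS

lemma W_setIntegral (N : ℕ) {B : Set Ω} (hB : MeasurableSet[F N] B) :
    ∫ ω in B, Wstep ξ η xv yv NS MS N ω ∂P = (P B).toReal := by
  classical
  set Bt : ℕ → Set Ω := fun t => B ∩ {ω | Tproc ξ η N ω = t} with hBt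
  have hBtmF : ∀ t, MeasurableSet[F N] (Bt t) :=
    fun t => hB.inter (TEq_meas F ξ η hξm hηm le_rfl)
  have hBtm : ∀ t, MeasurableSet (Bt t) := fun t => F.le N _ (hBtmF t)
  have hBunion : B = ⋃ t ∈ Finset.range (N+1), Bt t := by
    ext ω
    simp only [hBt, Finset.mem_range, mem_iUnion, mem_inter_iff, mem_setOf_eq, exists_prop]
    constructor
    · intro hω
      exact ⟨Tproc ξ η N ω, by have := T_le ξ η ω N; omega, hω, rfl⟩
    · rintro ⟨t, -, hω, -⟩
      exact hω
  have hdisj : (↑(Finset.range (N+1)) : Set ℕ).Pairwise (Function.onFun Disjoint Bt) := by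
    intro i _ j _ hij
    simp only [Function.onFun, hBt]
    rw [Set.disjoint_left]
    rintro ω ⟨-, h1⟩ ⟨-, h2⟩
    simp only [mem_setOf_eq] at h1 h2
    omega
  have hWb : ∀ ω, |Wstep ξ η xv yv NS MS N ω| ≤ 2 ^ (NS.card + MS.card) := by
    intro ω
    rw [abs_of_nonneg (Wstep_nonneg ξ η xv yv NS MS ω N)]
    exact Wstep_le ξ η xv yv NS MS ω N
  have hWint : Integrable (Wstep ξ η xv yv NS MS N) P :=
    integrable_of_bdd (((W_meas F ξ η hξm hηm xv yv NS MS N).mono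
      (F.le (N+1)) le_rfl).aestronglyMeasurable) hWb
  have hint : ∀ t ∈ Finset.range (N+1), IntegrableOn (Wstep ξ η xv yv NS MS N) (Bt t) P :=
    fun t _ => hWint.integrableOn
  rw [hBunion, integral_biUnion_finset (Finset.range (N+1)) (fun t _ => hBtm t) hdisj hint]
  have key : ∀ t ∈ Finset.range (N+1),
      ∫ ω in Bt t, Wstep ξ η xv yv NS MS N ω ∂P = (P (Bt t)).toReal := by
    intro t ht
    set g : ℝ → ℝ → ℝ := fun r s =>
      if r = s then (if t+1 ∈ NS then cF r (xv (t+1)) else 1)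
      else (if (N - t)+1 ∈ MS then cF r (yv ((N - t)+1)) else 1) with hg
    have hpt : ∀ ω ∈ Bt t, Wstep ξ η xv yv NS MS N ω = g (ξ (N+1) ω) (η (N+1) ω) := by
      intro ω hω
      have hT : Tproc ξ η N ω = t := hω.2
      have hS : Sproc ξ η N ω = N - t := by unfold Sproc; rw [hT]
      rw [Wstep_eq ξ η xv yv NS MS ω hNS hMS N, hT, hS, hg]
    rw [setIntegral_congr_fun (hBtm t) hpt]
    refine central_integral F hξm hηm hξv hηv hhalf (N+1) (by omega)
      (show MeasurableSet[F ((N+1)-1)] (Bt t) from hBtmF t) g ?_ ?_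
    · simp only [hg, if_pos rfl]
      by_cases h : t + 1 ∈ NS
      · rw [if_pos h, if_pos h]
        exact cF_add _ (hxv (t+1))
      · rw [if_neg h, if_neg h]
        norm_num
    · have hne : (1:ℝ) ≠ -1 := by norm_num
      have hne' : (-1:ℝ) ≠ 1 := by norm_num
      simp only [hg, if_neg hne, if_neg hne']
      by_cases h : (N - t) + 1 ∈ MS
      · rw [if_pos h, if_pos h]
        exact cF_add _ (hyv ((N-t)+1))
      · rw [if_neg h, if_neg h]
        norm_num
  rw [Finset.sum_congr rfl key,
    ← ENNReal.toReal_sum (fun t _ => measure_ne_top P _),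
    ← measure_biUnion_finset hdisj (fun t _ => hBtm t)]

lemma Z_integral (N : ℕ) : ∫ ω, Zproc ξ η xv yv NS MS N ω ∂P = 1 := by
  induction N with
  | zero =>
    have h0 : Zproc ξ η xv yv NS MS 0 = fun _ => (1:ℝ) :=
      funext fun ω => Z_zero ξ η xv yv ω NS MS
    rw [h0]
    simp
  | succ N ih =>
    set c : ℝ := 2 ^ (NS.card + MS.card) with hc
    have hZb : ∀ (M : ℕ) ω, |Zproc ξ η xv yv NS MS M ω| ≤ c := by
      intro M ω
      rw [abs_of_nonneg (Z_nonneg ξ η xv yv ω NS MS M)]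
      exact Z_le ξ η xv yv ω NS MS M
    have hZint : ∀ M, Integrable (Zproc ξ η xv yv NS MS M) P := fun M =>
      integrable_of_bdd (((Z_meas F ξ η hξm hηm xv yv NS MS M).mono
        (F.le M) le_rfl).aestronglyMeasurable) (hZb M)
    have hWb : ∀ ω, |Wstep ξ η xv yv NS MS N ω| ≤ c := by
      intro ω
      rw [abs_of_nonneg (Wstep_nonneg ξ η xv yv NS MS ω N)]
      exact Wstep_le ξ η xv yv NS MS ω N
    have hWint : Integrable (Wstep ξ η xv yv NS MS N) P :=
      integrable_of_bdd (((W_meas F ξ η hξm hηm xv yv NS MS N).mono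
        (F.le (N+1)) le_rfl).aestronglyMeasurable) hWb
    have hZW : Zproc ξ η xv yv NS MS (N+1) =
        (Zproc ξ η xv yv NS MS N) * (Wstep ξ η xv yv NS MS N) :=
      funext fun ω => Z_succ ξ η xv yv ω NS MS N
    have hZWint : Integrable ((Zproc ξ η xv yv NS MS N) * (Wstep ξ η xv yv NS MS N)) P := by
      rw [← hZW]
      exact hZint (N+1)
    have hW1 : (fun _ : Ω => (1:ℝ)) =ᵐ[P] P[Wstep ξ η xv yv NS MS N | F N] := by
      refine ae_eq_condExp_of_forall_setIntegral_eq (F.le N) hWint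
        (fun s _ _ => (integrable_const 1).integrableOn)
        (fun s hs _ => ?_)
        (stronglyMeasurable_const.aestronglyMeasurable)
      rw [W_setIntegral F hξm hηm hξv hηv hhalf xv yv hxv hyv NS MS hNS hMS N hs,
        setIntegral_const, smul_eq_mul, mul_one, measureReal_def]
    have hpull : P[(Zproc ξ η xv yv NS MS N) * (Wstep ξ η xv yv NS MS N) | F N]
        =ᵐ[P] (Zproc ξ η xv yv NS MS N) * P[Wstep ξ η xv yv NS MS N | F N] :=
      condExp_mul_of_stronglyMeasurable_left
        ((Z_meas F ξ η hξm hηm xv yv NS MS N).stronglyMeasurable) hZWint hWint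
    have step1 : ∫ ω, Zproc ξ η xv yv NS MS (N+1) ω ∂P =
        ∫ ω, ((Zproc ξ η xv yv NS MS N) * (Wstep ξ η xv yv NS MS N)) ω ∂P := by
      rw [hZW]
    have step2 : ∫ ω, ((Zproc ξ η xv yv NS MS N) * (Wstep ξ η xv yv NS MS N)) ω ∂P =
        ∫ ω, (P[(Zproc ξ η xv yv NS MS N) * (Wstep ξ η xv yv NS MS N) | F N]) ω ∂P :=
      (integral_condExp (F.le N)).symm
    have step3 : ∫ ω, (P[(Zproc ξ η xv yv NS MS N) * (Wstep ξ η xv yv NS MS N) | F N]) ω ∂P =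
        ∫ ω, Zproc ξ η xv yv NS MS N ω ∂P := by
      refine integral_congr_ae (hpull.trans ?_)
      filter_upwards [hW1] with ω hω
      simp only [Pi.mul_apply, ← hω, mul_one]
    rw [step1, step2, step3, ih]

end Induct

lemma measurableSet_tendsto_atTop' {f : ℕ → Ω → ℕ} (hf : ∀ i, Measurable (f i)) :
    MeasurableSet {ω | Tendsto (fun i => f i ω) atTop atTop} := by
  have hset : {ω | Tendsto (fun i => f i ω) atTop atTop} =
      ⋂ b, ⋃ N, ⋂ i, ⋂ (_ : N ≤ i), {ω | b ≤ f i ω} := by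
    ext ω
    simp only [mem_setOf_eq, mem_iInter, mem_iUnion]
    rw [tendsto_atTop_atTop]
  rw [hset]
  exact MeasurableSet.iInter fun b => MeasurableSet.iUnion fun N =>
    MeasurableSet.iInter fun i => MeasurableSet.iInter fun _ => hf i measurableSet_Ici

section Core
variable {P : Measure Ω} [IsProbabilityMeasure P] (F : MeasureTheory.Filtration ℕ mΩ)
  {ξ η : ℕ → Ω → ℝ}

lemma good_T {ω : Ω} (hω : Tendsto (fun i => Tproc ξ η i ω) atTop atTop)
    {n : ℕ} (hn : 1 ≤ n) : alphaProc ξ η n ω ≠ ⊤ := by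
  obtain ⟨N, hN⟩ := (hω.eventually_ge_atTop n).exists
  obtain ⟨k, hk1, -, hk3⟩ := hits_of_le (f := fun k => Tproc ξ η k ω) (T_zero ξ η ω) (T_step ξ η ω) (T_mono ξ η ω) hn hN
  exact (alpha_ne_top_iff ξ η ω).mpr ⟨k, hk1, hk3⟩

lemma good_S {ω : Ω} (hω : Tendsto (fun i => Sproc ξ η i ω) atTop atTop)
    {n : ℕ} (hn : 1 ≤ n) : betaProc ξ η n ω ≠ ⊤ := by
  obtain ⟨N, hN⟩ := (hω.eventually_ge_atTop n).exists
  obtain ⟨k, hk1, -, hk3⟩ := hits_of_le (f := fun k => Sproc ξ η k ω) (S_zero ξ η ω) (S_step ξ η ω) (S_mono ξ η ω) hn hN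
  exact (beta_ne_top_iff ξ η ω).mpr ⟨k, hk1, hk3⟩

variable (hξm : ∀ n, 1 ≤ n → Measurable[F n] (ξ n))
  (hηm : ∀ n, 1 ≤ n → Measurable[F n] (η n))
  (hξv : ∀ n ω, ξ n ω = 1 ∨ ξ n ω = -1)
  (hηv : ∀ n ω, η n ω = 1 ∨ η n ω = -1)
  (hhalf : ∀ n, 1 ≤ n →
      (P[({ω | ξ n ω = 1}).indicator (fun _ => (1 : ℝ)) | F (n - 1)] =ᵐ[P] fun _ => 1 / 2) ∧
      (P[({ω | ξ n ω = -1}).indicator (fun _ => (1 : ℝ)) | F (n - 1)] =ᵐ[P] fun _ => 1 / 2) ∧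
      (P[({ω | η n ω = 1}).indicator (fun _ => (1 : ℝ)) | F (n - 1)] =ᵐ[P] fun _ => 1 / 2) ∧
      (P[({ω | η n ω = -1}).indicator (fun _ => (1 : ℝ)) | F (n - 1)] =ᵐ[P] fun _ => 1 / 2))
  (hT : P {ω | Tendsto (fun i => Tproc ξ η i ω) atTop atTop} = 1)
  (hS : P {ω | Tendsto (fun i => Sproc ξ η i ω) atTop atTop} = 1)

include hξm hηm hξv hηv hhalf hT hS

lemma core_prob (xv yv : ℕ → ℝ) (hxv : ∀ n, xv n = 1 ∨ xv n = -1)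
    (hyv : ∀ m, yv m = 1 ∨ yv m = -1)
    (NS MS : Finset ℕ) (hNS : ∀ n ∈ NS, 1 ≤ n) (hMS : ∀ m ∈ MS, 1 ≤ m) :
    P ({ω | ∀ n ∈ NS, ξ (alphaProc ξ η n ω).toNat ω = xv n} ∩
       {ω | ∀ m ∈ MS, ξ (betaProc ξ η m ω).toNat ω = yv m})
      = 2⁻¹ ^ (NS.card + MS.card) := by
  classical
  set c : ℝ := 2 ^ (NS.card + MS.card) with hc
  set E0 : Set Ω := ({ω | ∀ n ∈ NS, ξ (alphaProc ξ η n ω).toNat ω = xv n} ∩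
       {ω | ∀ m ∈ MS, ξ (betaProc ξ η m ω).toNat ω = yv m}) with hE0
  set G : Set Ω := {ω | Tendsto (fun i => Tproc ξ η i ω) atTop atTop} ∩
      {ω | Tendsto (fun i => Sproc ξ η i ω) atTop atTop} with hG
  have hTmeas' : ∀ i, Measurable fun ω => Tproc ξ η i ω :=
    fun i => (T_meas F ξ η hξm hηm i).mono (F.le i) le_rfl
  have hSmeas' : ∀ i, Measurable fun ω => Sproc ξ η i ω :=
    fun i => (S_meas F ξ η hξm hηm i).mono (F.le i) le_rfl
  have hTm : MeasurableSet {ω | Tendsto (fun i => Tproc ξ η i ω) atTop atTop} :=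
    measurableSet_tendsto_atTop' hTmeas'
  have hSm : MeasurableSet {ω | Tendsto (fun i => Sproc ξ η i ω) atTop atTop} :=
    measurableSet_tendsto_atTop' hSmeas'
  have hGm : MeasurableSet G := hTm.inter hSm
  have hGc : P Gᶜ = 0 := by
    rw [hG, Set.compl_inter]
    refine le_antisymm (le_trans (measure_union_le _ _) ?_) zero_le
    rw [(prob_compl_eq_zero_iff hTm).mpr hT, (prob_compl_eq_zero_iff hSm).mpr hS, add_zero]
  have hGae : ∀ᵐ ω ∂P, ω ∈ G := by
    rw [ae_iff]
    convert hGc using 2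
    rfl
  -- measurable version of E0 ∩ G
  set E' : Set Ω := (⋂ n ∈ NS, ⋃ k : ℕ, ({ω | alphaProc ξ η n ω = ((k+1 : ℕ) : ℕ∞)} ∩
        {ω | ξ (k+1) ω = xv n})) ∩
      (⋂ m ∈ MS, ⋃ k : ℕ, ({ω | betaProc ξ η m ω = ((k+1 : ℕ) : ℕ∞)} ∩
        {ω | ξ (k+1) ω = yv m})) with hE'
  have hE'm : MeasurableSet E' := by
    refine MeasurableSet.inter ?_ ?_
    · refine MeasurableSet.biInter NS.countable_toSet fun n _ => MeasurableSet.iUnion fun k => ?_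
      exact (F.le (k+1) _ (alphaEq_meas F ξ η hξm hηm le_rfl)).inter
        ((((hξm (k+1) (by omega)).mono (F.le (k+1)) le_rfl)) (measurableSet_singleton (xv n)))
    · refine MeasurableSet.biInter MS.countable_toSet fun m _ => MeasurableSet.iUnion fun k => ?_
      exact (F.le (k+1) _ (betaEq_meas F ξ η hξm hηm le_rfl)).inter
        ((((hξm (k+1) (by omega)).mono (F.le (k+1)) le_rfl)) (measurableSet_singleton (yv m)))
  have hEG : E0 ∩ G = E' ∩ G := by
    ext ω
    simp only [hE0, hE', mem_inter_iff, mem_setOf_eq, mem_iInter, mem_iUnion]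
    constructor
    · rintro ⟨⟨h1, h2⟩, hωG⟩
      refine ⟨⟨fun n hn => ?_, fun m hm => ?_⟩, hωG⟩
      · have hne := good_T (hωG.1) (hNS n hn)
        obtain ⟨i, hi⟩ := WithTop.ne_top_iff_exists.mp hne
        have hi1 : 1 ≤ i := ((alpha_eq_iff ξ η ω).mp hi.symm).1.1
        obtain ⟨k, rfl⟩ : ∃ k, i = k + 1 := ⟨i - 1, by omega⟩
        refine ⟨k, hi.symm, ?_⟩
        have : (alphaProc ξ η n ω).toNat = k + 1 := by rw [← hi]; exact ENat.toNat_coe _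
        rw [← this]
        exact h1 n hn
      · have hne := good_S (hωG.2) (hMS m hm)
        obtain ⟨i, hi⟩ := WithTop.ne_top_iff_exists.mp hne
        have hi1 : 1 ≤ i := ((beta_eq_iff ξ η ω).mp hi.symm).1.1
        obtain ⟨k, rfl⟩ : ∃ k, i = k + 1 := ⟨i - 1, by omega⟩
        refine ⟨k, hi.symm, ?_⟩
        have : (betaProc ξ η m ω).toNat = k + 1 := by rw [← hi]; exact ENat.toNat_coe _
        rw [← this]
        exact h2 m hm
    · rintro ⟨⟨h1, h2⟩, hωG⟩
      refine ⟨⟨fun n hn => ?_, fun m hm => ?_⟩, hωG⟩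
      · obtain ⟨k, hk, hξk⟩ := h1 n hn
        have : (alphaProc ξ η n ω).toNat = k + 1 := by rw [hk]; exact ENat.toNat_coe _
        rw [this]
        exact hξk
      · obtain ⟨k, hk, hξk⟩ := h2 m hm
        have : (betaProc ξ η m ω).toNat = k + 1 := by rw [hk]; exact ENat.toNat_coe _
        rw [this]
        exact hξk
  set E : Set Ω := E0 ∩ G with hE
  have hEm : MeasurableSet E := by rw [hEG]; exact hE'm.inter hGm
  -- dominated convergence
  have hZb : ∀ (M : ℕ) ω, |Zproc ξ η xv yv NS MS M ω| ≤ c := by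
    intro M ω
    rw [abs_of_nonneg (Z_nonneg ξ η xv yv ω NS MS M)]
    exact Z_le ξ η xv yv ω NS MS M
  have hlim : ∀ᵐ ω ∂P, Tendsto (fun N => Zproc ξ η xv yv NS MS N ω) atTop
      (nhds (E.indicator (fun _ => c) ω)) := by
    filter_upwards [hGae] with ω hωG
    have hA : ∀ n ∈ NS, alphaProc ξ η n ω ≠ ⊤ := fun n hn => good_T hωG.1 (hNS n hn)
    have hB : ∀ m ∈ MS, betaProc ξ η m ω ≠ ⊤ := fun m hm => good_S hωG.2 (hMS m hm)
    have h1 := Z_tendsto ξ η xv yv NS MS ω hA hB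
    have h2 : Climit ξ η xv yv NS MS ω = E.indicator (fun _ => c) ω := by
      rw [Climit_eq, Set.indicator_apply]
      by_cases hcond : (∀ n ∈ NS, ξ (alphaProc ξ η n ω).toNat ω = xv n) ∧
          (∀ m ∈ MS, ξ (betaProc ξ η m ω).toNat ω = yv m)
      · rw [if_pos hcond, if_pos]
        exact ⟨⟨hcond.1, hcond.2⟩, hωG⟩
      · rw [if_neg hcond, if_neg]
        intro hωE
        exact hcond ⟨hωE.1.1, hωE.1.2⟩
    rw [← h2]
    exact h1
  have hmeaZ : ∀ N, AEStronglyMeasurable (Zproc ξ η xv yv NS MS N) P := fun N =>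
    ((Z_meas F ξ η hξm hηm xv yv NS MS N).mono (F.le N) le_rfl).aestronglyMeasurable
  have hDCT := tendsto_integral_of_dominated_convergence (fun _ => c) hmeaZ
    (integrable_const c) (fun N => ae_of_all _ (hZb N)) hlim
  have hconst : Tendsto (fun _ : ℕ => (1:ℝ)) atTop
      (nhds (∫ ω, E.indicator (fun _ => c) ω ∂P)) := by
    refine hDCT.congr fun N => ?_
    exact Z_integral F hξm hηm hξv hηv hhalf xv yv hxv hyv NS MS hNS hMS N
  have hval : ∫ ω, E.indicator (fun _ => c) ω ∂P = 1 :=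
    (tendsto_nhds_unique tendsto_const_nhds hconst).symm
  rw [integral_indicator_const c hEm, smul_eq_mul] at hval
  -- deduce P E
  have hcpos : (0:ℝ) < c := by positivity
  have hPE : (P E).toReal = 2⁻¹ ^ (NS.card + MS.card) := by
    have h1 : (P E).toReal = 1 / c := (eq_div_iff (ne_of_gt hcpos)).mpr hval
    rw [h1, hc, inv_pow, one_div]
  -- P E0 = P E
  have hPE0 : P E0 = P E := by
    have hsub : E0 ⊆ E ∪ Gᶜ := by
      intro ω hω
      by_cases hg : ω ∈ G
      · exact Or.inl ⟨hω, hg⟩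
      · exact Or.inr hg
    have h1 : P E0 ≤ P E := by
      calc P E0 ≤ P (E ∪ Gᶜ) := measure_mono hsub
        _ ≤ P E + P Gᶜ := measure_union_le _ _
        _ = P E := by rw [hGc, add_zero]
    exact le_antisymm h1 (measure_mono Set.inter_subset_left)
  rw [hPE0]
  have hne1 : P E ≠ ⊤ := measure_ne_top P E
  have hne2 : ((2:ENNReal)⁻¹) ^ (NS.card + MS.card) ≠ ⊤ :=
    ENNReal.pow_ne_top (by norm_num)
  refine (ENNReal.toReal_eq_toReal_iff' hne1 hne2).mp ?_
  rw [hPE]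
  simp [ENNReal.toReal_pow, ENNReal.toReal_inv]
end Core

theorem stmt_9
    {Ω : Type*} [mΩ : MeasurableSpace Ω] (P : Measure Ω) [IsProbabilityMeasure P]
    (F : MeasureTheory.Filtration ℕ mΩ) (hF0 : F 0 = ⊥)
    (ξ η : ℕ → Ω → ℝ)
    (hξm : ∀ n, 1 ≤ n → Measurable[F n] (ξ n))
    (hηm : ∀ n, 1 ≤ n → Measurable[F n] (η n))
    (hξv : ∀ n ω, ξ n ω = 1 ∨ ξ n ω = -1)
    (hηv : ∀ n ω, η n ω = 1 ∨ η n ω = -1)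
    (hhalf : ∀ n, 1 ≤ n →
      (P[({ω | ξ n ω = 1}).indicator (fun _ => (1 : ℝ)) | F (n - 1)] =ᵐ[P] fun _ => 1 / 2) ∧
      (P[({ω | ξ n ω = -1}).indicator (fun _ => (1 : ℝ)) | F (n - 1)] =ᵐ[P] fun _ => 1 / 2) ∧
      (P[({ω | η n ω = 1}).indicator (fun _ => (1 : ℝ)) | F (n - 1)] =ᵐ[P] fun _ => 1 / 2) ∧
      (P[({ω | η n ω = -1}).indicator (fun _ => (1 : ℝ)) | F (n - 1)] =ᵐ[P] fun _ => 1 / 2))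
    (ζ ψ : ℕ → Ω → ℝ)
    (hζm : ∀ n, Measurable (ζ n)) (hψm : ∀ n, Measurable (ψ n))
    (hζd : ∀ n, P {ω | ζ n ω = 1} = 2⁻¹ ∧ P {ω | ζ n ω = -1} = 2⁻¹)
    (hψd : ∀ n, P {ω | ψ n ω = 1} = 2⁻¹ ∧ P {ω | ψ n ω = -1} = 2⁻¹)
    (hindep : iIndep (fun i : ℕ ⊕ ℕ ⊕ Unit =>
      Sum.elim (fun n => MeasurableSpace.comap (ζ n) inferInstance)
        (Sum.elim (fun n => MeasurableSpace.comap (ψ n) inferInstance)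
          (fun _ => ⨆ n, (F n : MeasurableSpace Ω))) i) P)
    (hT : P {ω | Tendsto (fun i => Tproc ξ η i ω) atTop atTop} = 1)
    (hS : P {ω | Tendsto (fun i => Sproc ξ η i ω) atTop atTop} = 1) :
    (∀ n : ℕ, 1 ≤ n →
      (∀ᵐ ω ∂P, alphaProc ξ η n ω ≠ ⊤) ∧ (∀ᵐ ω ∂P, betaProc ξ η n ω ≠ ⊤) ∧
      (xiAlpha ξ η ζ n =ᵐ[P] fun ω => ξ (alphaProc ξ η n ω).toNat ω) ∧
      (xiBeta ξ η ψ n =ᵐ[P] fun ω => ξ (betaProc ξ η n ω).toNat ω)) ∧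
    (∀ (k l : ℕ) (nn : Fin k → ℕ) (mm : Fin l → ℕ),
      (∀ i, 1 ≤ nn i) → (∀ j, 1 ≤ mm j) →
      Function.Injective nn → Function.Injective mm →
      ∀ (x : Fin k → ℝ) (y : Fin l → ℝ),
        (∀ i, x i = 1 ∨ x i = -1) → (∀ j, y j = 1 ∨ y j = -1) →
        P ({ω | ∀ i, ξ (alphaProc ξ η (nn i) ω).toNat ω = x i}
            ∩ {ω | ∀ j, ξ (betaProc ξ η (mm j) ω).toNat ω = y j})
          = 2⁻¹ ^ (k + l)) := by
  classical
  have hTmeas' : ∀ i, Measurable fun ω => Tproc ξ η i ω :=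
    fun i => (T_meas F ξ η hξm hηm i).mono (F.le i) le_rfl
  have hSmeas' : ∀ i, Measurable fun ω => Sproc ξ η i ω :=
    fun i => (S_meas F ξ η hξm hηm i).mono (F.le i) le_rfl
  have hTm : MeasurableSet {ω | Tendsto (fun i => Tproc ξ η i ω) atTop atTop} :=
    measurableSet_tendsto_atTop' hTmeas'
  have hSm : MeasurableSet {ω | Tendsto (fun i => Sproc ξ η i ω) atTop atTop} :=
    measurableSet_tendsto_atTop' hSmeas'
  have hTae : ∀ᵐ ω ∂P, Tendsto (fun i => Tproc ξ η i ω) atTop atTop := by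
    rw [ae_iff]
    convert (prob_compl_eq_zero_iff hTm).mpr hT using 2
    rfl
  have hSae : ∀ᵐ ω ∂P, Tendsto (fun i => Sproc ξ η i ω) atTop atTop := by
    rw [ae_iff]
    convert (prob_compl_eq_zero_iff hSm).mpr hS using 2
    rfl
  constructor
  · intro n hn
    have hA : ∀ᵐ ω ∂P, alphaProc ξ η n ω ≠ ⊤ := by
      filter_upwards [hTae] with ω hω
      exact good_T hω hn
    have hB : ∀ᵐ ω ∂P, betaProc ξ η n ω ≠ ⊤ := by
      filter_upwards [hSae] with ω hω
      exact good_S hω hn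
    refine ⟨hA, hB, ?_, ?_⟩
    · filter_upwards [hA] with ω hω
      simp only [xiAlpha, if_neg hω]
    · filter_upwards [hB] with ω hω
      simp only [xiBeta, if_neg hω]
  · intro k l nn mm hnn1 hmm1 hinjn hinjm x y hx hy
    set NS : Finset ℕ := Finset.image nn Finset.univ with hNS
    set MS : Finset ℕ := Finset.image mm Finset.univ with hMS
    set xv : ℕ → ℝ := fun n => if h : ∃ i, nn i = n then x h.choose else 1 with hxv'
    set yv : ℕ → ℝ := fun m => if h : ∃ j, mm j = m then y h.choose else 1 with hyv'
    have hxv : ∀ n, xv n = 1 ∨ xv n = -1 := by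
      intro n
      rw [hxv']
      dsimp only
      split
      · exact hx _
      · exact Or.inl rfl
    have hyv : ∀ m, yv m = 1 ∨ yv m = -1 := by
      intro m
      rw [hyv']
      dsimp only
      split
      · exact hy _
      · exact Or.inl rfl
    have hxnn : ∀ i, xv (nn i) = x i := by
      intro i
      have h : ∃ j, nn j = nn i := ⟨i, rfl⟩
      rw [hxv']
      simp only [dif_pos h]
      exact congrArg x (hinjn h.choose_spec)
    have hymm : ∀ j, yv (mm j) = y j := by
      intro j
      have h : ∃ i, mm i = mm j := ⟨j, rfl⟩
      rw [hyv']
      simp only [dif_pos h]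
      exact congrArg y (hinjm h.choose_spec)
    have hNS1 : ∀ n ∈ NS, 1 ≤ n := by
      intro n hn
      obtain ⟨i, -, rfl⟩ := Finset.mem_image.mp hn
      exact hnn1 i
    have hMS1 : ∀ m ∈ MS, 1 ≤ m := by
      intro m hm
      obtain ⟨j, -, rfl⟩ := Finset.mem_image.mp hm
      exact hmm1 j
    have hcardN : NS.card = k := by
      rw [hNS, Finset.card_image_of_injective _ hinjn]
      simp
    have hcardM : MS.card = l := by
      rw [hMS, Finset.card_image_of_injective _ hinjm]
      simp
    have hsetA : {ω | ∀ i, ξ (alphaProc ξ η (nn i) ω).toNat ω = x i} =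
        {ω | ∀ n ∈ NS, ξ (alphaProc ξ η n ω).toNat ω = xv n} := by
      ext ω
      simp only [mem_setOf_eq]
      constructor
      · intro h n hns
        obtain ⟨i, -, rfl⟩ := Finset.mem_image.mp hns
        rw [hxnn i]
        exact h i
      · intro h i
        have := h (nn i) (Finset.mem_image_of_mem nn (Finset.mem_univ i))
        rwa [hxnn i] at this
    have hsetB : {ω | ∀ j, ξ (betaProc ξ η (mm j) ω).toNat ω = y j} =
        {ω | ∀ m ∈ MS, ξ (betaProc ξ η m ω).toNat ω = yv m} := by
      ext ω
      simp only [mem_setOf_eq]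
      constructor
      · intro h m hms
        obtain ⟨j, -, rfl⟩ := Finset.mem_image.mp hms
        rw [hymm j]
        exact h j
      · intro h j
        have := h (mm j) (Finset.mem_image_of_mem mm (Finset.mem_univ j))
        rwa [hymm j] at this
    rw [hsetA, hsetB, ← hcardN, ← hcardM]
    exact core_prob F hξm hηm hξv hηv hhalf hT hS xv yv hxv hyv NS MS hNS1 hMS1
end
end

section
/- Assume condition C1. Then for every n ≥ 1, almost surely P(ξ_n = η_n = 1 | H_{n−1} ∨ G_n) = P(ξ_n = η_n = −1 | H_{n−1} ∨ G_n) and P(ξ_n = 1, η_n = −1 | H_{n−1} ∨ G_n) = P(ξ_n = −1, η_n = 1 | H_{n−1} ∨ G_n). -/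
open MeasureTheory ProbabilityTheory Filter Set

noncomputable section

variable {Ω : Type*}

/-- `G n = σ(T k, 1 ≤ k ≤ n)`. -/
def Gfield (ξ η : ℕ → Ω → ℝ) (n : ℕ) : MeasurableSpace Ω :=
  ⨆ k ∈ Finset.Icc 1 n, MeasurableSpace.comap (fun ω => Tproc ξ η k ω) inferInstance

/-- `G ∞ = σ(T k, k ≥ 1)`. -/
def GfieldInf (ξ η : ℕ → Ω → ℝ) : MeasurableSpace Ω :=
  ⨆ k ∈ {k : ℕ | 1 ≤ k}, MeasurableSpace.comap (fun ω => Tproc ξ η k ω) inferInstance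

/-- `H n = σ(ξ k, η k, 1 ≤ k ≤ n)`. -/
def Hfield (ξ η : ℕ → Ω → ℝ) (n : ℕ) : MeasurableSpace Ω :=
  ⨆ k ∈ Finset.Icc 1 n,
    (MeasurableSpace.comap (ξ k) inferInstance ⊔ MeasurableSpace.comap (η k) inferInstance)

/-- `mA` and `mB` are conditionally independent given `m` (under `P`):
`P(A ∩ B | m) = P(A | m) * P(B | m)` a.s. for all `A ∈ mA`, `B ∈ mB`. -/
def CondIndepGiven [MeasurableSpace Ω] (P : Measure Ω) (m mA mB : MeasurableSpace Ω) : Prop :=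
  ∀ A B : Set Ω, MeasurableSet[mA] A → MeasurableSet[mB] B →
    (P[(A ∩ B).indicator (fun _ => (1 : ℝ)) | m]) =ᵐ[P]
      fun ω => (P[A.indicator (fun _ => (1 : ℝ)) | m]) ω * (P[B.indicator (fun _ => (1 : ℝ)) | m]) ω

section Aux

open MeasurableSpace

variable {Ω : Type*}

lemma measurable_Qproc {m' : MeasurableSpace Ω} {ξ η : ℕ → Ω → ℝ} {k : ℕ}
    (hξ : Measurable[m'] (ξ k)) (hη : Measurable[m'] (η k)) :
    Measurable[m'] (Qproc ξ η k) := by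
  unfold Qproc
  exact Measurable.ite (measurableSet_eq_fun hξ hη) measurable_const measurable_const

lemma measurable_Tproc [mΩ : MeasurableSpace Ω] (F : MeasureTheory.Filtration ℕ mΩ)
    {ξ η : ℕ → Ω → ℝ}
    (hξm : ∀ n, 1 ≤ n → Measurable[F n] (ξ n))
    (hηm : ∀ n, 1 ≤ n → Measurable[F n] (η n))
    (n : ℕ) : Measurable[F n] (Tproc ξ η n) := by
  unfold Tproc
  refine Finset.measurable_sum _ (fun k hk => ?_)
  simp only [Finset.mem_Icc] at hk
  exact measurable_Qproc ((hξm k hk.1).mono (F.mono hk.2) le_rfl)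
    ((hηm k hk.1).mono (F.mono hk.2) le_rfl)

/-- If the conditional probability of `E` given `m` is `1/2`, then
`P (E ∩ D) = P D / 2` in `toReal` form, for `D` in `m`. -/
lemma half_inter [mΩ : MeasurableSpace Ω] (P : MeasureTheory.Measure Ω)
    [MeasureTheory.IsProbabilityMeasure P]
    (F : MeasureTheory.Filtration ℕ mΩ) (j : ℕ) {E D : Set Ω} (hE : MeasurableSet[mΩ] E)
    (hD : MeasurableSet[F j] D)
    (hhalf : P[E.indicator (fun _ => (1 : ℝ)) | F j] =ᵐ[P] fun _ => 1 / 2) :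
    (P (E ∩ D)).toReal = (P D).toReal / 2 := by
  have hint : MeasureTheory.Integrable (E.indicator fun _ => (1 : ℝ)) P :=
    (MeasureTheory.integrable_const 1).indicator hE
  have h1 : ∫ x in D, E.indicator (fun _ => (1 : ℝ)) x ∂P = (P (E ∩ D)).toReal := by
    rw [MeasureTheory.setIntegral_indicator hE, MeasureTheory.setIntegral_const,
      Set.inter_comm D E, smul_eq_mul, mul_one, measureReal_def]
  have h2 : ∫ x in D, (P[E.indicator (fun _ => (1 : ℝ)) | F j]) x ∂P
      = ∫ x in D, E.indicator (fun _ => (1 : ℝ)) x ∂P :=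
    MeasureTheory.setIntegral_condExp (F.le j) hint hD
  have h3 : ∫ x in D, (P[E.indicator (fun _ => (1 : ℝ)) | F j]) x ∂P
      = ∫ (_ : Ω) in D, (1 / 2 : ℝ) ∂P :=
    MeasureTheory.integral_congr_ae (MeasureTheory.ae_restrict_of_ae hhalf)
  rw [MeasureTheory.setIntegral_const, smul_eq_mul, measureReal_def] at h3
  rw [← h1, ← h2, h3]; ring

/-- The four joint events have pairwise-matching probabilities when intersected with any
`F (n-1)`-measurable set. -/
lemma four_events [mΩ : MeasurableSpace Ω] (P : MeasureTheory.Measure Ω)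
    [MeasureTheory.IsProbabilityMeasure P]
    (F : MeasureTheory.Filtration ℕ mΩ)
    {ξ η : ℕ → Ω → ℝ} {n : ℕ} (hn : 1 ≤ n)
    (hξm : Measurable[F n] (ξ n)) (hηm : Measurable[F n] (η n))
    (hξv : ∀ ω, ξ n ω = 1 ∨ ξ n ω = -1)
    (hηv : ∀ ω, η n ω = 1 ∨ η n ω = -1)
    (hhalf :
      (P[({ω | ξ n ω = 1}).indicator (fun _ => (1 : ℝ)) | F (n - 1)] =ᵐ[P] fun _ => 1 / 2) ∧
      (P[({ω | ξ n ω = -1}).indicator (fun _ => (1 : ℝ)) | F (n - 1)] =ᵐ[P] fun _ => 1 / 2) ∧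
      (P[({ω | η n ω = 1}).indicator (fun _ => (1 : ℝ)) | F (n - 1)] =ᵐ[P] fun _ => 1 / 2) ∧
      (P[({ω | η n ω = -1}).indicator (fun _ => (1 : ℝ)) | F (n - 1)] =ᵐ[P] fun _ => 1 / 2))
    {D : Set Ω} (hD : MeasurableSet[F (n - 1)] D) :
    P ({ω | ξ n ω = 1 ∧ η n ω = 1} ∩ D) = P ({ω | ξ n ω = -1 ∧ η n ω = -1} ∩ D) ∧
    P ({ω | ξ n ω = 1 ∧ η n ω = -1} ∩ D) = P ({ω | ξ n ω = -1 ∧ η n ω = 1} ∩ D) := by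
  have hξM : Measurable (ξ n) := hξm.mono (F.le n) le_rfl
  have hηM : Measurable (η n) := hηm.mono (F.le n) le_rfl
  have hEξ : ∀ c : ℝ, MeasurableSet {ω | ξ n ω = c} := fun c =>
    hξM (measurableSet_singleton c)
  have hEη : ∀ c : ℝ, MeasurableSet {ω | η n ω = c} := fun c =>
    hηM (measurableSet_singleton c)
  have hJ : ∀ a b : ℝ, MeasurableSet ({ω | ξ n ω = a ∧ η n ω = b}) := fun a b => by
    have : {ω | ξ n ω = a ∧ η n ω = b} = {ω | ξ n ω = a} ∩ {ω | η n ω = b} := rfl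
    rw [this]; exact (hEξ a).inter (hEη b)
  set d := (P D).toReal with hd
  -- splitting along η for fixed ξ-value
  have splitξ : ∀ a : ℝ,
      (P ({ω | ξ n ω = a} ∩ D)).toReal
        = (P ({ω | ξ n ω = a ∧ η n ω = 1} ∩ D)).toReal
          + (P ({ω | ξ n ω = a ∧ η n ω = -1} ∩ D)).toReal := by
    intro a
    have hset : {ω | ξ n ω = a} ∩ D
        = ({ω | ξ n ω = a ∧ η n ω = 1} ∩ D) ∪ ({ω | ξ n ω = a ∧ η n ω = -1} ∩ D) := by
      ext ω
      simp only [Set.mem_inter_iff, Set.mem_setOf_eq, Set.mem_union]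
      constructor
      · rintro ⟨h1, h2⟩
        rcases hηv ω with h | h
        · exact Or.inl ⟨⟨h1, h⟩, h2⟩
        · exact Or.inr ⟨⟨h1, h⟩, h2⟩
      · rintro (⟨⟨h1, _⟩, h2⟩ | ⟨⟨h1, _⟩, h2⟩) <;> exact ⟨h1, h2⟩
    have hdisj : Disjoint ({ω | ξ n ω = a ∧ η n ω = 1} ∩ D)
        ({ω | ξ n ω = a ∧ η n ω = -1} ∩ D) := by
      rw [Set.disjoint_left]
      rintro ω ⟨h1, _⟩ ⟨h2, _⟩
      simp only [Set.mem_setOf_eq] at h1 h2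
      rw [h1.2] at h2
      norm_num at h2
    rw [hset, MeasureTheory.measure_union hdisj ((hJ a (-1)).inter ((F.le _) D hD)),
      ENNReal.toReal_add (MeasureTheory.measure_ne_top P _) (MeasureTheory.measure_ne_top P _)]
  have splitη : ∀ b : ℝ,
      (P ({ω | η n ω = b} ∩ D)).toReal
        = (P ({ω | ξ n ω = 1 ∧ η n ω = b} ∩ D)).toReal
          + (P ({ω | ξ n ω = -1 ∧ η n ω = b} ∩ D)).toReal := by
    intro b
    have hset : {ω | η n ω = b} ∩ D
        = ({ω | ξ n ω = 1 ∧ η n ω = b} ∩ D) ∪ ({ω | ξ n ω = -1 ∧ η n ω = b} ∩ D) := by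
      ext ω
      simp only [Set.mem_inter_iff, Set.mem_setOf_eq, Set.mem_union]
      constructor
      · rintro ⟨h1, h2⟩
        rcases hξv ω with h | h
        · exact Or.inl ⟨⟨h, h1⟩, h2⟩
        · exact Or.inr ⟨⟨h, h1⟩, h2⟩
      · rintro (⟨⟨_, h1⟩, h2⟩ | ⟨⟨_, h1⟩, h2⟩) <;> exact ⟨h1, h2⟩
    have hdisj : Disjoint ({ω | ξ n ω = 1 ∧ η n ω = b} ∩ D)
        ({ω | ξ n ω = -1 ∧ η n ω = b} ∩ D) := by
      rw [Set.disjoint_left]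
      rintro ω ⟨h1, _⟩ ⟨h2, _⟩
      simp only [Set.mem_setOf_eq] at h1 h2
      rw [h1.1] at h2
      norm_num at h2
    rw [hset, MeasureTheory.measure_union hdisj ((hJ (-1) b).inter ((F.le _) D hD)),
      ENNReal.toReal_add (MeasureTheory.measure_ne_top P _) (MeasureTheory.measure_ne_top P _)]
  have e1 : (P ({ω | ξ n ω = 1} ∩ D)).toReal = d / 2 :=
    half_inter P F (n - 1) (hEξ 1) hD hhalf.1
  have e2 : (P ({ω | ξ n ω = -1} ∩ D)).toReal = d / 2 :=
    half_inter P F (n - 1) (hEξ (-1)) hD hhalf.2.1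
  have e3 : (P ({ω | η n ω = 1} ∩ D)).toReal = d / 2 :=
    half_inter P F (n - 1) (hEη 1) hD hhalf.2.2.1
  have e4 : (P ({ω | η n ω = -1} ∩ D)).toReal = d / 2 :=
    half_inter P F (n - 1) (hEη (-1)) hD hhalf.2.2.2
  have s1 := splitξ 1
  have s2 := splitξ (-1)
  have s3 := splitη 1
  have s4 := splitη (-1)
  rw [e1] at s1; rw [e2] at s2; rw [e3] at s3; rw [e4] at s4
  constructor
  · refine (ENNReal.toReal_eq_toReal_iff' (MeasureTheory.measure_ne_top P _)
      (MeasureTheory.measure_ne_top P _)).mp ?_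
    linarith
  · refine (ENNReal.toReal_eq_toReal_iff' (MeasureTheory.measure_ne_top P _)
      (MeasureTheory.measure_ne_top P _)).mp ?_
    linarith

end Aux

section Aux2

open MeasurableSpace

variable {Ω : Type*}

/-- The auxiliary larger σ-field `F (n-1) ⊔ σ(T n)`. -/
def Mbig [mΩ : MeasurableSpace Ω] (F : MeasureTheory.Filtration ℕ mΩ)
    (ξ η : ℕ → Ω → ℝ) (n : ℕ) : MeasurableSpace Ω :=
  F (n - 1) ⊔ MeasurableSpace.comap (fun ω => Tproc ξ η n ω) inferInstance

/-- Main abstract lemma: if `A` and `B` are events on which `Q n` is constantly `c`, and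
`P (A ∩ D) = P (B ∩ D)` for all `F (n-1)`-measurable `D`, then the conditional probabilities
of `A` and `B` given `H (n-1) ⊔ G n` agree. -/
lemma condexp_eq_of_inter_eq [mΩ : MeasurableSpace Ω] (P : MeasureTheory.Measure Ω)
    [MeasureTheory.IsProbabilityMeasure P]
    (F : MeasureTheory.Filtration ℕ mΩ)
    {ξ η : ℕ → Ω → ℝ}
    (hξm : ∀ n, 1 ≤ n → Measurable[F n] (ξ n))
    (hηm : ∀ n, 1 ≤ n → Measurable[F n] (η n))
    {n : ℕ} (hn : 1 ≤ n)
    {A B : Set Ω} (hA : MeasurableSet[mΩ] A) (hB : MeasurableSet[mΩ] B) (c : ℕ)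
    (hAq : ∀ ω ∈ A, Qproc ξ η n ω = c) (hBq : ∀ ω ∈ B, Qproc ξ η n ω = c)
    (hkey : ∀ D : Set Ω, MeasurableSet[F (n - 1)] D → P (A ∩ D) = P (B ∩ D)) :
    P[A.indicator (fun _ => (1 : ℝ)) | Hfield ξ η (n - 1) ⊔ Gfield ξ η n] =ᵐ[P]
      P[B.indicator (fun _ => (1 : ℝ)) | Hfield ξ η (n - 1) ⊔ Gfield ξ η n] := by
  have hTmeas : ∀ k, Measurable[F k] (Tproc ξ η k) := measurable_Tproc F hξm hηm
  have hM' : Mbig F ξ η n ≤ mΩ := by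
    refine sup_le (F.le _) ?_
    exact Measurable.comap_le ((hTmeas n).mono (F.le n) le_rfl)
  -- m ≤ M'
  have hHle : Hfield ξ η (n - 1) ≤ F (n - 1) := by
    refine iSup_le fun k => iSup_le fun hk => ?_
    simp only [Finset.mem_Icc] at hk
    exact sup_le
      (Measurable.comap_le ((hξm k hk.1).mono (F.mono hk.2) le_rfl))
      (Measurable.comap_le ((hηm k hk.1).mono (F.mono hk.2) le_rfl))
  have hmM' : Hfield ξ η (n - 1) ⊔ Gfield ξ η n ≤ Mbig F ξ η n := by
    refine sup_le (hHle.trans le_sup_left) ?_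
    refine iSup_le fun k => iSup_le fun hk => ?_
    simp only [Finset.mem_Icc] at hk
    rcases eq_or_lt_of_le hk.2 with h | h
    · subst h; exact le_sup_right
    · have hk' : k ≤ n - 1 := by omega
      exact le_trans
        (Measurable.comap_le ((hTmeas k).mono (F.mono hk') le_rfl))
        (le_sup_left : F (n - 1) ≤ Mbig F ξ η n)
  have hm : Hfield ξ η (n - 1) ⊔ Gfield ξ η n ≤ mΩ := hmM'.trans hM'
  -- the generating π-system of M'
  have hπ : IsPiSystem
      {s : Set Ω | ∃ D V, MeasurableSet[F (n - 1)] D ∧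
        s = D ∩ (fun ω => Tproc ξ η n ω) ⁻¹' V} := by
    rintro _ ⟨D, V, hD, rfl⟩ _ ⟨D', V', hD', rfl⟩ _
    refine ⟨D ∩ D', V ∩ V', hD.inter hD', ?_⟩
    ext ω
    simp only [Set.mem_inter_iff, Set.mem_preimage]
    tauto
  have hgen : Mbig F ξ η n = MeasurableSpace.generateFrom
      {s : Set Ω | ∃ D V, MeasurableSet[F (n - 1)] D ∧
        s = D ∩ (fun ω => Tproc ξ η n ω) ⁻¹' V} := by
    refine le_antisymm (sup_le ?_ ?_) (MeasurableSpace.generateFrom_le ?_)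
    · intro s hs
      exact MeasurableSpace.measurableSet_generateFrom ⟨s, Set.univ, hs, by simp⟩
    · rintro s ⟨V, _, rfl⟩
      exact MeasurableSpace.measurableSet_generateFrom
        ⟨Set.univ, V, MeasurableSet.univ, by simp⟩
    · rintro s ⟨D, V, hD, rfl⟩
      refine MeasurableSet.inter ?_ ?_
      · exact (le_sup_left : F (n - 1) ≤ Mbig F ξ η n) D hD
      · exact (le_sup_right : MeasurableSpace.comap (fun ω => Tproc ξ η n ω) inferInstance
          ≤ Mbig F ξ η n) _ ⟨V, trivial, rfl⟩
  -- T n = T (n-1) + Q n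
  have hTsplit : ∀ ω, Tproc ξ η n ω = Tproc ξ η (n - 1) ω + Qproc ξ η n ω := by
    intro ω
    obtain ⟨p, rfl⟩ : ∃ p, n = p + 1 := ⟨n - 1, by omega⟩
    simp only [Nat.add_sub_cancel]
    unfold Tproc
    rw [← Finset.sum_Icc_succ_top (by omega : 1 ≤ p + 1)]
  -- key: agreement on all M'-measurable sets
  have hkey' : ∀ s : Set Ω, MeasurableSet[Mbig F ξ η n] s → P (A ∩ s) = P (B ∩ s) := by
    have hPAB : P A = P B := by
      have := hkey Set.univ MeasurableSet.univ
      simpa using this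
    refine MeasurableSpace.induction_on_inter (C := fun s _ => P (A ∩ s) = P (B ∩ s))
      hgen hπ (by simp) ?_ ?_ ?_
    · rintro _ ⟨D, V, hD, rfl⟩
      have hW : MeasurableSet[F (n - 1)] ((fun ω => Tproc ξ η (n - 1) ω + c) ⁻¹' V) := by
        have hmeasW : Measurable[F (n - 1)] (fun ω => Tproc ξ η (n - 1) ω + c) :=
          (hTmeas (n - 1)).add measurable_const
        exact hmeasW trivial
      have hAs : A ∩ (D ∩ (fun ω => Tproc ξ η n ω) ⁻¹' V)
          = A ∩ (D ∩ (fun ω => Tproc ξ η (n - 1) ω + c) ⁻¹' V) := by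
        ext ω
        simp only [Set.mem_inter_iff, Set.mem_preimage]
        constructor
        · rintro ⟨hωA, hωD, hωV⟩
          rw [hTsplit ω, hAq ω hωA] at hωV
          exact ⟨hωA, hωD, hωV⟩
        · rintro ⟨hωA, hωD, hωV⟩
          refine ⟨hωA, hωD, ?_⟩
          rw [hTsplit ω, hAq ω hωA]
          exact hωV
      have hBs : B ∩ (D ∩ (fun ω => Tproc ξ η n ω) ⁻¹' V)
          = B ∩ (D ∩ (fun ω => Tproc ξ η (n - 1) ω + c) ⁻¹' V) := by
        ext ω
        simp only [Set.mem_inter_iff, Set.mem_preimage]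
        constructor
        · rintro ⟨hωB, hωD, hωV⟩
          rw [hTsplit ω, hBq ω hωB] at hωV
          exact ⟨hωB, hωD, hωV⟩
        · rintro ⟨hωB, hωD, hωV⟩
          refine ⟨hωB, hωD, ?_⟩
          rw [hTsplit ω, hBq ω hωB]
          exact hωV
      rw [hAs, hBs]
      exact hkey _ (hD.inter hW)
    · intro t ht hpt
      have ht' : MeasurableSet[mΩ] t := hM' t ht
      have hA1 : P (A ∩ t) + P (A \ t) = P A := MeasureTheory.measure_inter_add_diff A ht'
      have hB1 : P (B ∩ t) + P (B \ t) = P B := MeasureTheory.measure_inter_add_diff B ht'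
      have hAc : A ∩ tᶜ = A \ t := by rw [Set.diff_eq]
      have hBc : B ∩ tᶜ = B \ t := by rw [Set.diff_eq]
      rw [hAc, hBc]
      rw [hpt] at hA1
      rw [← hPAB, ← hA1] at hB1
      exact (ENNReal.add_right_inj (MeasureTheory.measure_ne_top P _)).mp hB1.symm
    · intro f hdisj hmeas hp
      rw [Set.inter_iUnion, Set.inter_iUnion,
        MeasureTheory.measure_iUnion
          (fun i j hij => ((hdisj hij).mono Set.inter_subset_right Set.inter_subset_right))
          (fun i => hA.inter (hM' _ (hmeas i))),
        MeasureTheory.measure_iUnion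
          (fun i j hij => ((hdisj hij).mono Set.inter_subset_right Set.inter_subset_right))
          (fun i => hB.inter (hM' _ (hmeas i)))]
      exact tsum_congr hp
  -- conclude via uniqueness of conditional expectation
  haveI : MeasureTheory.SigmaFinite (P.trim hm) := by infer_instance
  have hintA : MeasureTheory.Integrable (A.indicator fun _ => (1 : ℝ)) P :=
    (MeasureTheory.integrable_const 1).indicator hA
  have hintB : MeasureTheory.Integrable (B.indicator fun _ => (1 : ℝ)) P :=
    (MeasureTheory.integrable_const 1).indicator hB
  have hind : ∀ (E : Set Ω), MeasurableSet[mΩ] E → ∀ s : Set Ω,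
      MeasurableSet[Hfield ξ η (n - 1) ⊔ Gfield ξ η n] s →
      ∫ x in s, E.indicator (fun _ => (1 : ℝ)) x ∂P = (P (E ∩ s)).toReal := by
    intro E hE s hs
    rw [MeasureTheory.setIntegral_indicator hE, MeasureTheory.setIntegral_const,
      Set.inter_comm s E, smul_eq_mul, mul_one, measureReal_def]
  refine (MeasureTheory.ae_eq_condExp_of_forall_setIntegral_eq hm hintA
    (fun s hs _ => MeasureTheory.integrable_condExp.integrableOn)
    (fun s hs _ => ?_)
    (MeasureTheory.StronglyMeasurable.aestronglyMeasurable
      MeasureTheory.stronglyMeasurable_condExp)).symm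
  rw [MeasureTheory.setIntegral_condExp hm hintB hs, hind A hA s hs, hind B hB s hs,
    hkey' s (hmM' s hs)]

end Aux2

theorem stmt_12
    {Ω : Type*} [mΩ : MeasurableSpace Ω] (P : Measure Ω) [IsProbabilityMeasure P]
    (F : MeasureTheory.Filtration ℕ mΩ) (hF0 : F 0 = ⊥)
    (ξ η : ℕ → Ω → ℝ)
    (hξm : ∀ n, 1 ≤ n → Measurable[F n] (ξ n))
    (hηm : ∀ n, 1 ≤ n → Measurable[F n] (η n))
    (hξv : ∀ n ω, ξ n ω = 1 ∨ ξ n ω = -1)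
    (hηv : ∀ n ω, η n ω = 1 ∨ η n ω = -1)
    (hhalf : ∀ n, 1 ≤ n →
      (P[({ω | ξ n ω = 1}).indicator (fun _ => (1 : ℝ)) | F (n - 1)] =ᵐ[P] fun _ => 1 / 2) ∧
      (P[({ω | ξ n ω = -1}).indicator (fun _ => (1 : ℝ)) | F (n - 1)] =ᵐ[P] fun _ => 1 / 2) ∧
      (P[({ω | η n ω = 1}).indicator (fun _ => (1 : ℝ)) | F (n - 1)] =ᵐ[P] fun _ => 1 / 2) ∧
      (P[({ω | η n ω = -1}).indicator (fun _ => (1 : ℝ)) | F (n - 1)] =ᵐ[P] fun _ => 1 / 2))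
    (hC1 : ∀ n : ℕ, CondIndepGiven P (Gfield ξ η n) (Hfield ξ η n) (GfieldInf ξ η)) :
    ∀ n : ℕ, 1 ≤ n →
      (P[({ω | ξ n ω = 1 ∧ η n ω = 1}).indicator (fun _ => (1 : ℝ)) |
          Hfield ξ η (n - 1) ⊔ Gfield ξ η n] =ᵐ[P]
        P[({ω | ξ n ω = -1 ∧ η n ω = -1}).indicator (fun _ => (1 : ℝ)) |
          Hfield ξ η (n - 1) ⊔ Gfield ξ η n]) ∧
      (P[({ω | ξ n ω = 1 ∧ η n ω = -1}).indicator (fun _ => (1 : ℝ)) |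
          Hfield ξ η (n - 1) ⊔ Gfield ξ η n] =ᵐ[P]
        P[({ω | ξ n ω = -1 ∧ η n ω = 1}).indicator (fun _ => (1 : ℝ)) |
          Hfield ξ η (n - 1) ⊔ Gfield ξ η n]) := by
  intro n hn
  have hξM : Measurable (ξ n) := (hξm n hn).mono (F.le n) le_rfl
  have hηM : Measurable (η n) := (hηm n hn).mono (F.le n) le_rfl
  have hJ : ∀ a b : ℝ, MeasurableSet ({ω | ξ n ω = a ∧ η n ω = b}) := fun a b => by
    have : {ω | ξ n ω = a ∧ η n ω = b} = {ω | ξ n ω = a} ∩ {ω | η n ω = b} := rfl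
    rw [this]
    exact (hξM (measurableSet_singleton a)).inter (hηM (measurableSet_singleton b))
  have hfour := fun D (hD : MeasurableSet[F (n - 1)] D) =>
    four_events P F hn (hξm n hn) (hηm n hn) (hξv n) (hηv n) (hhalf n hn) hD
  constructor
  · refine condexp_eq_of_inter_eq P F hξm hηm hn (hJ 1 1) (hJ (-1) (-1)) 1 ?_ ?_
      (fun D hD => (hfour D hD).1)
    · rintro ω ⟨h1, h2⟩
      unfold Qproc
      rw [if_pos (by rw [h1, h2])]
    · rintro ω ⟨h1, h2⟩
      unfold Qproc
      rw [if_pos (by rw [h1, h2])]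
  · refine condexp_eq_of_inter_eq P F hξm hηm hn (hJ 1 (-1)) (hJ (-1) 1) 0 ?_ ?_
      (fun D hD => (hfour D hD).2)
    · rintro ω ⟨h1, h2⟩
      unfold Qproc
      rw [if_neg (by rw [h1, h2]; norm_num)]
    · rintro ω ⟨h1, h2⟩
      unfold Qproc
      rw [if_neg (by rw [h1, h2]; norm_num)]
end
end

section
/- If the three processes X = (X_n)_{n≥1}, Y = (Y_n)_{n≥1} and T = (T_n)_{n≥1} are mutually independent (i.e. the σ-fields σ(X_n, n ≥ 1), σ(Y_n, n ≥ 1), σ(T_n, n ≥ 1) are mutually independent), then condition C1 holds: for every n ≥ 1, the σ-fields H_n and G_∞ are conditionally independent given G_n. -/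
open MeasureTheory ProbabilityTheory Filter Set

noncomputable section

variable {Ω : Type*}

lemma measurable_glue {α : Type*} {Ω' : Type*} [m : MeasurableSpace Ω'] [Countable α]
    (g : Ω' → α) (F : α → Ω' → ℝ)
    (hg : ∀ v, MeasurableSet {ω | g ω = v}) (hF : ∀ v, Measurable (F v)) :
    Measurable (fun ω => F (g ω) ω) := by
  intro s hs
  have h : (fun ω => F (g ω) ω) ⁻¹' s = ⋃ v, ({ω | g ω = v} ∩ (F v) ⁻¹' s) := by
    ext ω
    simp only [Set.mem_preimage, Set.mem_iUnion, Set.mem_inter_iff, Set.mem_setOf_eq]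
    exact ⟨fun h => ⟨g ω, rfl, h⟩, fun ⟨v, hv, hmem⟩ => hv ▸ hmem⟩
  rw [h]
  exact MeasurableSet.iUnion fun v => (hg v).inter (hF v hs)

lemma sup_eq_generateFrom_inter {Ω : Type*} (m₁ m₂ : MeasurableSpace Ω) :
    m₁ ⊔ m₂ = MeasurableSpace.generateFrom
      (image2 (· ∩ ·) {s | MeasurableSet[m₁] s} {s | MeasurableSet[m₂] s}) := by
  refine le_antisymm (sup_le ?_ ?_) (MeasurableSpace.generateFrom_le ?_)
  · intro s hs
    exact MeasurableSpace.measurableSet_generateFrom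
      ⟨s, hs, Set.univ, MeasurableSet.univ, by simp⟩
  · intro s hs
    exact MeasurableSpace.measurableSet_generateFrom
      ⟨Set.univ, MeasurableSet.univ, s, hs, by simp⟩
  · rintro t ⟨s₁, hs₁, s₂, hs₂, rfl⟩
    exact (le_sup_left (b := m₂) _ hs₁).inter (le_sup_right (a := m₁) _ hs₂)

lemma isPiSystem_inter_sets {Ω : Type*} (m₁ m₂ : MeasurableSpace Ω) :
    IsPiSystem (image2 (· ∩ ·) {s | MeasurableSet[m₁] s} {s | MeasurableSet[m₂] s}) := by
  rintro _ ⟨s₁, hs₁, t₁, ht₁, rfl⟩ _ ⟨s₂, hs₂, t₂, ht₂, rfl⟩ -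
  exact ⟨s₁ ∩ s₂, hs₁.inter hs₂, t₁ ∩ t₂, ht₁.inter ht₂, by
    simp only [image2]; rw [Set.inter_inter_inter_comm]⟩

section Abstract
variable {Ω : Type*} {mS mT m' : MeasurableSpace Ω} [mΩ : MeasurableSpace Ω]
  (P : Measure Ω) [IsProbabilityMeasure P]

/-- Set-lintegral identity: for `C ∈ mS ⊔ m'`, `∫⁻_C E[1_B|m'] = P(C ∩ B)`. -/
lemma key_setLIntegral (hS : mS ≤ mΩ) (hT : mT ≤ mΩ) (h'T : m' ≤ mT)
    (hST : Indep mS mT P) {B : Set Ω} (hB : MeasurableSet[mT] B)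
    {C : Set Ω} (hC : MeasurableSet[mS ⊔ m'] C) :
    ∫⁻ ω in C, ENNReal.ofReal ((P[B.indicator (fun _ => (1:ℝ)) | m']) ω) ∂P = P (C ∩ B) := by
  have h'm : m' ≤ mΩ := h'T.trans hT
  haveI : SigmaFinite (P.trim h'm) := IsFiniteMeasure.toSigmaFinite _
  set fB := B.indicator (fun _ => (1:ℝ)) with hfB
  set g := P[fB | m'] with hgdef
  have hfB_int : Integrable fB P := (integrable_const 1).indicator (hT _ hB)
  have hg_int : Integrable g P := integrable_condExp
  have hg_nonneg : 0 ≤ᵐ[P] g :=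
    condExp_nonneg (Eventually.of_forall fun ω => Set.indicator_nonneg (fun _ _ => zero_le_one) ω)
  have hsup : mS ⊔ m' ≤ mΩ := sup_le hS h'm
  -- total mass
  have htotal : ∫⁻ ω, ENNReal.ofReal (g ω) ∂P = P B := by
    rw [← ofReal_integral_eq_lintegral_ofReal hg_int hg_nonneg]
    rw [hgdef, integral_condExp h'm]
    rw [hfB, integral_indicator_const _ (hT _ hB)]
    simp [ENNReal.ofReal_toReal (measure_ne_top P B)]
  revert C
  have hind := @MeasurableSpace.induction_on_inter Ω (mS ⊔ m')
    (fun C _ => ∫⁻ ω in C, ENNReal.ofReal (g ω) ∂P = P (C ∩ B))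
    (image2 (· ∩ ·) {s | MeasurableSet[mS] s} {s | MeasurableSet[m'] s})
    (sup_eq_generateFrom_inter mS m') (isPiSystem_inter_sets mS m')
    ?_ ?_ ?_ ?_
  · exact fun C hC => hind _ hC
  · simp
  · -- base case
    rintro _ ⟨S, hSmem, G, hGmem, rfl⟩
    have hSm : MeasurableSet S := hS _ hSmem
    have hGm : MeasurableSet G := h'm _ hGmem
    have step1 : ∫⁻ ω in S ∩ G, ENNReal.ofReal (g ω) ∂P
        = ENNReal.ofReal (∫ ω in S ∩ G, g ω ∂P) := by
      rw [ofReal_integral_eq_lintegral_ofReal hg_int.integrableOn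
        (ae_restrict_of_ae hg_nonneg)]
    have hindf : IndepFun (S.indicator (fun _ => (1:ℝ))) (G.indicator g) P := by
      rw [IndepFun_iff_Indep]
      refine indep_of_indep_of_le_left (indep_of_indep_of_le_right hST ?_) ?_
      · rw [← measurable_iff_comap_le]
        exact ((stronglyMeasurable_condExp.measurable).mono h'T le_rfl).indicator (h'T _ hGmem)
      · rw [← measurable_iff_comap_le]
        exact measurable_const.indicator hSmem
    have step2 : ∫ ω in S ∩ G, g ω ∂P
        = ∫ ω, (S.indicator (fun _ => (1:ℝ)) ω) * (G.indicator g ω) ∂P := by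
      rw [← integral_indicator (hSm.inter hGm)]
      congr 1
      funext ω
      by_cases hs : ω ∈ S <;> by_cases hg : ω ∈ G <;>
        simp [Set.indicator, hs, hg]
    have step3 : ∫ ω, (S.indicator (fun _ => (1:ℝ)) ω) * (G.indicator g ω) ∂P
        = (∫ ω, S.indicator (fun _ => (1:ℝ)) ω ∂P) * ∫ ω, G.indicator g ω ∂P :=
      hindf.integral_fun_mul_eq_mul_integral ((integrable_const 1).indicator hSm).aestronglyMeasurable
        (hg_int.indicator hGm).aestronglyMeasurable
    have step4 : ∫ ω, S.indicator (fun _ => (1:ℝ)) ω ∂P = (P S).toReal := by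
      rw [integral_indicator_const _ hSm]; simp [measureReal_def]
    have step5 : ∫ ω, G.indicator g ω ∂P = (P (G ∩ B)).toReal := by
      rw [integral_indicator hGm, hgdef, setIntegral_condExp h'm hfB_int hGmem, hfB,
        setIntegral_indicator (hT _ hB), setIntegral_const]
      simp [measureReal_def]
    rw [step1, step2, step3, step4, step5, ← ENNReal.toReal_mul,
      ENNReal.ofReal_toReal (by finiteness)]
    rw [Set.inter_assoc]
    exact ((Indep_iff _ _ _).mp hST S (G ∩ B) hSmem ((h'T _ hGmem).inter hB)).symm
  · -- compl
    intro t htm ht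
    have htM : MeasurableSet t := hsup _ htm
    have hadd := lintegral_add_compl (fun ω => ENNReal.ofReal (g ω)) htM (μ := P)
    rw [ht, htotal] at hadd
    have hmeas : P (t ∩ B) + P (tᶜ ∩ B) = P B := by
      have h := measure_inter_add_diff (μ := P) B htM
      rw [Set.diff_eq] at h
      rw [Set.inter_comm t B, Set.inter_comm tᶜ B]
      exact h
    rw [← hmeas] at hadd
    exact (ENNReal.add_right_inj (measure_ne_top P _)).mp hadd
  · -- union
    intro f hdisj hfm hf
    have hfM : ∀ i, MeasurableSet (f i) := fun i => hsup _ (hfm i)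
    rw [lintegral_iUnion hfM hdisj, Set.iUnion_inter]
    rw [measure_iUnion (f := fun i => f i ∩ B)
        (fun i j hij => ((hdisj hij).mono Set.inter_subset_left Set.inter_subset_left))
        (fun i => (hfM i).inter (hT _ hB))]
    exact tsum_congr hf
end Abstract

section Abstract2
variable {Ω : Type*} {mS mT m' : MeasurableSpace Ω} [mΩ : MeasurableSpace Ω]
  (P : Measure Ω) [IsProbabilityMeasure P]

lemma key_setIntegral (hS : mS ≤ mΩ) (hT : mT ≤ mΩ) (h'T : m' ≤ mT)
    (hST : Indep mS mT P) {B : Set Ω} (hB : MeasurableSet[mT] B)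
    {C : Set Ω} (hC : MeasurableSet[mS ⊔ m'] C) :
    ∫ ω in C, (P[B.indicator (fun _ => (1:ℝ)) | m']) ω ∂P = (P (C ∩ B)).toReal := by
  have h'm : m' ≤ mΩ := h'T.trans hT
  have hg_nonneg : (0:Ω → ℝ) ≤ᵐ[P] P[B.indicator (fun _ => (1:ℝ)) | m'] :=
    condExp_nonneg (Eventually.of_forall fun ω => Set.indicator_nonneg (fun _ _ => zero_le_one) ω)
  rw [integral_eq_lintegral_of_nonneg_ae (ae_restrict_of_ae hg_nonneg)
    ((stronglyMeasurable_condExp.mono h'm).aestronglyMeasurable.restrict),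
    key_setLIntegral P hS hT h'T hST hB hC]

lemma condexp_inter_eq_mul (hS : mS ≤ mΩ) (hT : mT ≤ mΩ) (h'T : m' ≤ mT)
    (hST : Indep mS mT P) {A B : Set Ω}
    (hA : MeasurableSet[mS ⊔ m'] A) (hB : MeasurableSet[mT] B) :
    (P[(A ∩ B).indicator (fun _ => (1:ℝ)) | m']) =ᵐ[P]
      fun ω => (P[A.indicator (fun _ => (1:ℝ)) | m']) ω *
        (P[B.indicator (fun _ => (1:ℝ)) | m']) ω := by
  have h'm : m' ≤ mΩ := h'T.trans hT
  haveI : SigmaFinite (P.trim h'm) := IsFiniteMeasure.toSigmaFinite _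
  have hsup : mS ⊔ m' ≤ mΩ := sup_le hS h'm
  have hAm : MeasurableSet A := hsup _ hA
  have hBm : MeasurableSet B := hT _ hB
  set fA := A.indicator (fun _ => (1:ℝ)) with hfA
  set fB := B.indicator (fun _ => (1:ℝ)) with hfB
  set h := P[fA | m'] with hhdef
  set g := P[fB | m'] with hgdef
  have hfA_int : Integrable fA P := (integrable_const 1).indicator hAm
  have hfB_int : Integrable fB P := (integrable_const 1).indicator hBm
  have hg_int : Integrable g P := integrable_condExp
  have hh_nonneg : (0:Ω → ℝ) ≤ᵐ[P] h :=
    condExp_nonneg (Eventually.of_forall fun ω => Set.indicator_nonneg (fun _ _ => zero_le_one) ω)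
  have hh_le_one : h ≤ᵐ[P] fun _ => (1:ℝ) := by
    have h1 : P[fun _ => (1:ℝ) | m'] = fun _ => (1:ℝ) := condExp_const h'm 1
    have := condExp_mono (μ := P) (m := m') hfA_int (integrable_const 1)
      (Eventually.of_forall fun ω => by
        by_cases hω : ω ∈ A <;> simp [hfA, Set.indicator, hω])
    rwa [h1] at this
  have hh_bound : ∀ᵐ ω ∂P, ‖h ω‖ ≤ 1 := by
    filter_upwards [hh_nonneg, hh_le_one] with ω h0 h1
    rw [Real.norm_eq_abs, abs_of_nonneg h0]; exact h1
  have hhg_int : Integrable (fun ω => h ω * g ω) P :=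
    hg_int.bdd_mul ((stronglyMeasurable_condExp.mono h'm).aestronglyMeasurable) hh_bound
  refine (ae_eq_condExp_of_forall_setIntegral_eq h'm
    ((integrable_const 1).indicator (hAm.inter hBm)) (fun s _ _ => hhg_int.integrableOn)
    (fun s hs _ => ?_)
    ((stronglyMeasurable_condExp.mul stronglyMeasurable_condExp).aestronglyMeasurable)).symm
  have hsm : MeasurableSet s := h'm _ hs
  -- RHS
  have hR : ∫ x in s, (A ∩ B).indicator (fun _ => (1:ℝ)) x ∂P = (P (s ∩ (A ∩ B))).toReal := by
    rw [setIntegral_indicator (hAm.inter hBm), setIntegral_const]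
    simp [measureReal_def]
  rw [hR]
  -- LHS
  have hz : StronglyMeasurable[m'] (s.indicator g) := stronglyMeasurable_condExp.indicator hs
  have hint1 : Integrable (fun ω => s.indicator g ω * fA ω) P := by
    have h2 : Integrable (fun ω => fA ω * s.indicator g ω) P :=
      Integrable.bdd_mul (c := 1) (hg_int.indicator hsm)
        (hfA_int.aestronglyMeasurable)
        (Eventually.of_forall fun ω => by
          by_cases hω : ω ∈ A <;> simp [hfA, Set.indicator, hω])
    simpa [mul_comm] using h2
  have hpull : P[(fun ω => s.indicator g ω * fA ω) | m'] =ᵐ[P]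
      fun ω => s.indicator g ω * h ω := by
    have := condExp_mul_of_stronglyMeasurable_left hz hint1 hfA_int
    exact this
  have e1 : ∫ x in s, h x * g x ∂P = ∫ x, s.indicator g x * h x ∂P := by
    rw [← integral_indicator hsm]
    congr 1
    funext ω
    by_cases hω : ω ∈ s <;> simp [Set.indicator, hω, mul_comm]
  have e2 : ∫ x, s.indicator g x * h x ∂P = ∫ x, s.indicator g x * fA x ∂P := by
    rw [← integral_congr_ae hpull, integral_condExp h'm]
  have e3 : ∫ x, s.indicator g x * fA x ∂P = ∫ x in s ∩ A, g x ∂P := by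
    rw [← integral_indicator (hsm.inter hAm)]
    congr 1
    funext ω
    by_cases hω : ω ∈ s <;> by_cases hω' : ω ∈ A <;>
      simp [Set.indicator, hω, hω', hfA]
  have e4 : ∫ x in s ∩ A, g x ∂P = (P ((s ∩ A) ∩ B)).toReal :=
    key_setIntegral P hS hT h'T hST hB ((le_sup_right (a := mS) _ hs).inter hA)
  calc ∫ x in s, (fun ω => h ω * g ω) x ∂P = ∫ x in s, h x * g x ∂P := rfl
    _ = (P ((s ∩ A) ∩ B)).toReal := by rw [e1, e2, e3, e4]
    _ = (P (s ∩ (A ∩ B))).toReal := by rw [Set.inter_assoc]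
end Abstract2

/-! ### Concrete lemmas about the processes -/

section Concrete
variable (ξ η ζ ψ : ℕ → Ω → ℝ)

lemma Qproc_le_one (k : ℕ) (ω : Ω) : Qproc ξ η k ω ≤ 1 := by
  unfold Qproc; split <;> simp

lemma Tproc_succ (m : ℕ) (ω : Ω) :
    Tproc ξ η (m + 1) ω = Tproc ξ η m ω + Qproc ξ η (m + 1) ω :=
  Finset.sum_Icc_succ_top (Nat.le_add_left 1 m) _

lemma Tproc_mono {j k : ℕ} (h : j ≤ k) (ω : Ω) : Tproc ξ η j ω ≤ Tproc ξ η k ω :=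
  Finset.sum_le_sum_of_subset (Finset.Icc_subset_Icc le_rfl h)

lemma Tproc_le_self (k : ℕ) (ω : Ω) : Tproc ξ η k ω ≤ k := by
  calc Tproc ξ η k ω ≤ ∑ _i ∈ Finset.Icc 1 k, 1 :=
        Finset.sum_le_sum fun i _ => Qproc_le_one ξ η i ω
    _ = k := by simp

lemma Sproc_step (m : ℕ) (ω : Ω) : Sproc ξ η m ω ≤ Sproc ξ η (m + 1) ω := by
  have h1 := Tproc_succ ξ η m ω
  have h2 := Tproc_le_self ξ η m ω
  have h3 := Qproc_le_one ξ η (m + 1) ω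
  unfold Sproc; omega

lemma Sproc_mono {j k : ℕ} (h : j ≤ k) (ω : Ω) : Sproc ξ η j ω ≤ Sproc ξ η k ω := by
  have : Monotone (fun m => Sproc ξ η m ω) :=
    monotone_nat_of_le_succ fun m => Sproc_step ξ η m ω
  exact this h

/-! #### hitting-time lemmas for `alphaProc` -/

lemma alpha_eq {n k : ℕ} {ω : Ω} (hk : 1 ≤ k) (hT : Tproc ξ η k ω = n)
    (hmin : ∀ j, 1 ≤ j → j < k → Tproc ξ η j ω ≠ n) :
    alphaProc ξ η n ω = (k : ℕ∞) := by
  unfold alphaProc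
  refine le_antisymm (iInf₂_le k ⟨hk, hT⟩) (le_iInf₂ fun j hj => ?_)
  exact_mod_cast Nat.cast_le.mpr (not_lt.mp fun hlt => hmin j hj.1 hlt hj.2)

lemma alpha_eq_top_iff {n : ℕ} {ω : Ω} :
    alphaProc ξ η n ω = ⊤ ↔ ∀ j, ¬(1 ≤ j ∧ Tproc ξ η j ω = n) := by
  simp [alphaProc, iInf_eq_top]

lemma alpha_find {n : ℕ} {ω : Ω} (h : ∃ j, 1 ≤ j ∧ Tproc ξ η j ω = n) :
    alphaProc ξ η n ω = ((Nat.find h : ℕ) : ℕ∞) :=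
  alpha_eq ξ η (Nat.find_spec h).1 (Nat.find_spec h).2
    (fun j h1 hlt hT => Nat.find_min h hlt ⟨h1, hT⟩)

lemma alpha_eq_coe_iff {n k : ℕ} {ω : Ω} :
    alphaProc ξ η n ω = (k : ℕ∞) ↔
      (1 ≤ k ∧ Tproc ξ η k ω = n) ∧ ∀ j < k, ¬(1 ≤ j ∧ Tproc ξ η j ω = n) := by
  constructor
  · intro hα
    by_cases h : ∃ j, 1 ≤ j ∧ Tproc ξ η j ω = n
    · have hfind := alpha_find ξ η h
      rw [hα] at hfind
      have hk : k = Nat.find h := by exact_mod_cast hfind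
      subst hk
      exact ⟨Nat.find_spec h, fun j hj => Nat.find_min h hj⟩
    · exfalso
      have : alphaProc ξ η n ω = ⊤ := (alpha_eq_top_iff ξ η).mpr (by push_neg at h ⊢; exact h)
      rw [hα] at this
      exact (ENat.coe_ne_top k) this
  · rintro ⟨⟨hk, hT⟩, hmin⟩
    exact alpha_eq ξ η hk hT (fun j h1 hlt hT' => hmin j hlt ⟨h1, hT'⟩)

lemma xiAlpha_eq {n k : ℕ} {ω : Ω} (hk : 1 ≤ k) (hT : Tproc ξ η k ω = n)
    (hmin : ∀ j, 1 ≤ j → j < k → Tproc ξ η j ω ≠ n) :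
    xiAlpha ξ η ζ n ω = ξ k ω := by
  unfold xiAlpha
  rw [alpha_eq ξ η hk hT hmin]
  simp

lemma Xproc_succ (m : ℕ) (ω : Ω) :
    Xproc ξ η ζ (m + 1) ω = Xproc ξ η ζ m ω + xiAlpha ξ η ζ (m + 1) ω :=
  Finset.sum_Icc_succ_top (Nat.le_add_left 1 m) _

/-! #### hitting-time lemmas for `betaProc` -/

lemma beta_eq {n k : ℕ} {ω : Ω} (hk : 1 ≤ k) (hS : Sproc ξ η k ω = n)
    (hmin : ∀ j, 1 ≤ j → j < k → Sproc ξ η j ω ≠ n) :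
    betaProc ξ η n ω = (k : ℕ∞) := by
  unfold betaProc
  refine le_antisymm (iInf₂_le k ⟨hk, hS⟩) (le_iInf₂ fun j hj => ?_)
  exact_mod_cast Nat.cast_le.mpr (not_lt.mp fun hlt => hmin j hj.1 hlt hj.2)

lemma beta_eq_top_iff {n : ℕ} {ω : Ω} :
    betaProc ξ η n ω = ⊤ ↔ ∀ j, ¬(1 ≤ j ∧ Sproc ξ η j ω = n) := by
  simp [betaProc, iInf_eq_top]

lemma beta_find {n : ℕ} {ω : Ω} (h : ∃ j, 1 ≤ j ∧ Sproc ξ η j ω = n) :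
    betaProc ξ η n ω = ((Nat.find h : ℕ) : ℕ∞) :=
  beta_eq ξ η (Nat.find_spec h).1 (Nat.find_spec h).2
    (fun j h1 hlt hS => Nat.find_min h hlt ⟨h1, hS⟩)

lemma beta_eq_coe_iff {n k : ℕ} {ω : Ω} :
    betaProc ξ η n ω = (k : ℕ∞) ↔
      (1 ≤ k ∧ Sproc ξ η k ω = n) ∧ ∀ j < k, ¬(1 ≤ j ∧ Sproc ξ η j ω = n) := by
  constructor
  · intro hβ
    by_cases h : ∃ j, 1 ≤ j ∧ Sproc ξ η j ω = n
    · have hfind := beta_find ξ η h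
      rw [hβ] at hfind
      have hk : k = Nat.find h := by exact_mod_cast hfind
      subst hk
      exact ⟨Nat.find_spec h, fun j hj => Nat.find_min h hj⟩
    · exfalso
      have : betaProc ξ η n ω = ⊤ := (beta_eq_top_iff ξ η).mpr (by push_neg at h ⊢; exact h)
      rw [hβ] at this
      exact (ENat.coe_ne_top k) this
  · rintro ⟨⟨hk, hS⟩, hmin⟩
    exact beta_eq ξ η hk hS (fun j h1 hlt hS' => hmin j hlt ⟨h1, hS'⟩)

lemma xiBeta_eq {n k : ℕ} {ω : Ω} (hk : 1 ≤ k) (hS : Sproc ξ η k ω = n)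
    (hmin : ∀ j, 1 ≤ j → j < k → Sproc ξ η j ω ≠ n) :
    xiBeta ξ η ψ n ω = ξ k ω := by
  unfold xiBeta
  rw [beta_eq ξ η hk hS hmin]
  simp

lemma Yproc_succ (m : ℕ) (ω : Ω) :
    Yproc ξ η ψ (m + 1) ω = Yproc ξ η ψ m ω + xiBeta ξ η ψ (m + 1) ω :=
  Finset.sum_Icc_succ_top (Nat.le_add_left 1 m) _

/-! #### reconstruction of `ξ k` and `η k` -/

lemma xi_reconstruct {k : ℕ} (hk : 1 ≤ k) (ω : Ω) :
    ξ k ω = if Qproc ξ η k ω = 1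
      then Xproc ξ η ζ (Tproc ξ η k ω) ω - Xproc ξ η ζ (Tproc ξ η k ω - 1) ω
      else Yproc ξ η ψ (Sproc ξ η k ω) ω - Yproc ξ η ψ (Sproc ξ η k ω - 1) ω := by
  obtain ⟨m, rfl⟩ : ∃ m, k = m + 1 := ⟨k - 1, by omega⟩
  have hTsucc := Tproc_succ ξ η m ω
  have hTle := Tproc_le_self ξ η m ω
  by_cases hQ : Qproc ξ η (m + 1) ω = 1
  · rw [if_pos hQ]
    have ht : Tproc ξ η (m + 1) ω = Tproc ξ η m ω + 1 := by omega
    have hmin : ∀ j, 1 ≤ j → j < m + 1 → Tproc ξ η j ω ≠ Tproc ξ η (m + 1) ω := by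
      intro j h1 hlt
      have := Tproc_mono ξ η (show j ≤ m by omega) ω
      omega
    have hxi : xiAlpha ξ η ζ (Tproc ξ η (m + 1) ω) ω = ξ (m + 1) ω :=
      xiAlpha_eq ξ η ζ (Nat.le_add_left 1 m) rfl hmin
    rw [ht] at hxi ⊢
    rw [Nat.add_sub_cancel, Xproc_succ ξ η ζ (Tproc ξ η m ω) ω, hxi]
    ring
  · rw [if_neg hQ]
    have hQ0 : Qproc ξ η (m + 1) ω = 0 := by
      have := Qproc_le_one ξ η (m + 1) ω; omega
    have hs : Sproc ξ η (m + 1) ω = Sproc ξ η m ω + 1 := by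
      unfold Sproc; omega
    have hmin : ∀ j, 1 ≤ j → j < m + 1 → Sproc ξ η j ω ≠ Sproc ξ η (m + 1) ω := by
      intro j h1 hlt
      have := Sproc_mono ξ η (show j ≤ m by omega) ω
      omega
    have hxi : xiBeta ξ η ψ (Sproc ξ η (m + 1) ω) ω = ξ (m + 1) ω :=
      xiBeta_eq ξ η ψ (Nat.le_add_left 1 m) rfl hmin
    rw [hs] at hxi ⊢
    rw [Nat.add_sub_cancel, Yproc_succ ξ η ψ (Sproc ξ η m ω) ω, hxi]
    ring

lemma eta_reconstruct (hξv : ∀ n ω, ξ n ω = 1 ∨ ξ n ω = -1)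
    (hηv : ∀ n ω, η n ω = 1 ∨ η n ω = -1) (k : ℕ) (ω : Ω) :
    η k ω = if Qproc ξ η k ω = 1 then ξ k ω else -ξ k ω := by
  unfold Qproc
  by_cases h : ξ k ω = η k ω
  · simp [h]
  · simp only [h, if_false]
    rcases hξv k ω with h1 | h1 <;> rcases hηv k ω with h2 | h2
    · exact absurd (h1.trans h2.symm) h
    · rw [h2, h1]; norm_num
    · rw [h2, h1]; norm_num
    · exact absurd (h1.trans h2.symm) h

end Concrete

/-! ### Measurability lemmas -/

section Meas
variable [mΩ : MeasurableSpace Ω] (ξ η ζ ψ : ℕ → Ω → ℝ)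

lemma meas_Q (hξ : ∀ k, 1 ≤ k → Measurable (ξ k)) (hη : ∀ k, 1 ≤ k → Measurable (η k))
    {k : ℕ} (hk : 1 ≤ k) : Measurable (Qproc ξ η k) :=
  Measurable.ite (measurableSet_eq_fun (hξ k hk) (hη k hk)) measurable_const measurable_const

lemma meas_T (hξ : ∀ k, 1 ≤ k → Measurable (ξ k)) (hη : ∀ k, 1 ≤ k → Measurable (η k))
    (k : ℕ) : Measurable (Tproc ξ η k) := by
  unfold Tproc
  exact Finset.measurable_sum _ fun i hi =>
    meas_Q ξ η hξ hη (Finset.mem_Icc.mp hi).1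

lemma measSet_alpha (hξ : ∀ k, 1 ≤ k → Measurable (ξ k))
    (hη : ∀ k, 1 ≤ k → Measurable (η k)) (n : ℕ) (v : ℕ∞) :
    MeasurableSet {ω | alphaProc ξ η n ω = v} := by
  have hTj : ∀ j, MeasurableSet {ω | Tproc ξ η j ω = n} := fun j =>
    meas_T ξ η hξ hη j (measurableSet_singleton n)
  have hpiece : ∀ j, MeasurableSet {ω | ¬(1 ≤ j ∧ Tproc ξ η j ω = n)} := by
    intro j
    by_cases h1 : 1 ≤ j
    · simp only [h1, true_and]
      exact (hTj j).compl
    · simp only [h1, false_and, not_false_eq_true, Set.setOf_true]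
      exact MeasurableSet.univ
  induction v using ENat.recTopCoe with
  | top =>
    have : {ω | alphaProc ξ η n ω = ⊤} = ⋂ j, {ω | ¬(1 ≤ j ∧ Tproc ξ η j ω = n)} := by
      ext ω; simp [alpha_eq_top_iff ξ η, Set.mem_iInter]
    rw [this]
    exact MeasurableSet.iInter hpiece
  | coe k =>
    have : {ω | alphaProc ξ η n ω = (k : ℕ∞)} =
        ({ω | 1 ≤ k ∧ Tproc ξ η k ω = n} ∩
          ⋂ j, ⋂ (_ : j < k), {ω | ¬(1 ≤ j ∧ Tproc ξ η j ω = n)}) := by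
      ext ω
      simp only [Set.mem_setOf_eq, Set.mem_inter_iff, Set.mem_iInter, alpha_eq_coe_iff ξ η]
    rw [this]
    refine MeasurableSet.inter ?_ (MeasurableSet.iInter fun j =>
      MeasurableSet.iInter fun _ => hpiece j)
    by_cases h1 : 1 ≤ k
    · simp only [h1, true_and]; exact hTj k
    · simp only [h1, false_and, Set.setOf_false]
      exact MeasurableSet.empty

lemma measSet_beta (hξ : ∀ k, 1 ≤ k → Measurable (ξ k))
    (hη : ∀ k, 1 ≤ k → Measurable (η k)) (n : ℕ) (v : ℕ∞) :
    MeasurableSet {ω | betaProc ξ η n ω = v} := by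
  have hSmeas : ∀ j, Measurable (Sproc ξ η j) := fun j =>
    (measurable_const.sub (meas_T ξ η hξ hη j))
  have hTj : ∀ j, MeasurableSet {ω | Sproc ξ η j ω = n} := fun j =>
    hSmeas j (measurableSet_singleton n)
  have hpiece : ∀ j, MeasurableSet {ω | ¬(1 ≤ j ∧ Sproc ξ η j ω = n)} := by
    intro j
    by_cases h1 : 1 ≤ j
    · simp only [h1, true_and]
      exact (hTj j).compl
    · simp only [h1, false_and, not_false_eq_true, Set.setOf_true]
      exact MeasurableSet.univ
  induction v using ENat.recTopCoe with
  | top =>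
    have : {ω | betaProc ξ η n ω = ⊤} = ⋂ j, {ω | ¬(1 ≤ j ∧ Sproc ξ η j ω = n)} := by
      ext ω; simp [beta_eq_top_iff ξ η, Set.mem_iInter]
    rw [this]
    exact MeasurableSet.iInter hpiece
  | coe k =>
    have : {ω | betaProc ξ η n ω = (k : ℕ∞)} =
        ({ω | 1 ≤ k ∧ Sproc ξ η k ω = n} ∩
          ⋂ j, ⋂ (_ : j < k), {ω | ¬(1 ≤ j ∧ Sproc ξ η j ω = n)}) := by
      ext ω
      simp only [Set.mem_setOf_eq, Set.mem_inter_iff, Set.mem_iInter, beta_eq_coe_iff ξ η]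
    rw [this]
    refine MeasurableSet.inter ?_ (MeasurableSet.iInter fun j =>
      MeasurableSet.iInter fun _ => hpiece j)
    by_cases h1 : 1 ≤ k
    · simp only [h1, true_and]; exact hTj k
    · simp only [h1, false_and, Set.setOf_false]
      exact MeasurableSet.empty

lemma meas_xiAlpha (hξ : ∀ k, 1 ≤ k → Measurable (ξ k))
    (hη : ∀ k, 1 ≤ k → Measurable (η k)) (hζm : ∀ k, Measurable (ζ k)) (n : ℕ) :
    Measurable (xiAlpha ξ η ζ n) := by
  have heq : xiAlpha ξ η ζ n = fun ω =>
      (fun (v : ℕ∞) (ω' : Ω) => if v = ⊤ then ζ n ω'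
        else if 1 ≤ v.toNat then ξ v.toNat ω' else 0) (alphaProc ξ η n ω) ω := by
    funext ω
    by_cases htop : alphaProc ξ η n ω = ⊤
    · simp [xiAlpha, htop]
    · obtain ⟨k, hk⟩ : ∃ k : ℕ, alphaProc ξ η n ω = (k : ℕ∞) := by
        cases h : alphaProc ξ η n ω with
        | top => exact absurd h htop
        | coe k => exact ⟨k, rfl⟩
      have h1k : 1 ≤ k := ((alpha_eq_coe_iff ξ η).mp hk).1.1
      simp [xiAlpha, hk, h1k]
    -- done
  rw [heq]
  refine measurable_glue (alphaProc ξ η n)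
    (fun (v : ℕ∞) (ω' : Ω) => if v = ⊤ then ζ n ω' else if 1 ≤ v.toNat then ξ v.toNat ω' else 0)
    (measSet_alpha ξ η hξ hη n) ?_
  · intro v
    induction v using ENat.recTopCoe with
    | top => simpa using hζm n
    | coe k =>
      by_cases h1 : 1 ≤ k
      · simpa [ENat.coe_ne_top, h1] using hξ k h1
      · simp [ENat.coe_ne_top, h1]

lemma meas_xiBeta (hξ : ∀ k, 1 ≤ k → Measurable (ξ k))
    (hη : ∀ k, 1 ≤ k → Measurable (η k)) (hψm : ∀ k, Measurable (ψ k)) (n : ℕ) :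
    Measurable (xiBeta ξ η ψ n) := by
  have heq : xiBeta ξ η ψ n = fun ω =>
      (fun (v : ℕ∞) (ω' : Ω) => if v = ⊤ then ψ n ω'
        else if 1 ≤ v.toNat then ξ v.toNat ω' else 0) (betaProc ξ η n ω) ω := by
    funext ω
    by_cases htop : betaProc ξ η n ω = ⊤
    · simp [xiBeta, htop]
    · obtain ⟨k, hk⟩ : ∃ k : ℕ, betaProc ξ η n ω = (k : ℕ∞) := by
        cases h : betaProc ξ η n ω with
        | top => exact absurd h htop
        | coe k => exact ⟨k, rfl⟩
      have h1k : 1 ≤ k := ((beta_eq_coe_iff ξ η).mp hk).1.1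
      simp [xiBeta, hk, h1k]
  rw [heq]
  refine measurable_glue (betaProc ξ η n)
    (fun (v : ℕ∞) (ω' : Ω) => if v = ⊤ then ψ n ω' else if 1 ≤ v.toNat then ξ v.toNat ω' else 0)
    (measSet_beta ξ η hξ hη n) ?_
  · intro v
    induction v using ENat.recTopCoe with
    | top => simpa using hψm n
    | coe k =>
      by_cases h1 : 1 ≤ k
      · simpa [ENat.coe_ne_top, h1] using hξ k h1
      · simp [ENat.coe_ne_top, h1]

lemma meas_X (hξ : ∀ k, 1 ≤ k → Measurable (ξ k))
    (hη : ∀ k, 1 ≤ k → Measurable (η k)) (hζm : ∀ k, Measurable (ζ k)) (n : ℕ) :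
    Measurable (Xproc ξ η ζ n) :=
  Finset.measurable_sum _ fun i _ => meas_xiAlpha ξ η ζ hξ hη hζm i

lemma meas_Y (hξ : ∀ k, 1 ≤ k → Measurable (ξ k))
    (hη : ∀ k, 1 ≤ k → Measurable (η k)) (hψm : ∀ k, Measurable (ψ k)) (n : ℕ) :
    Measurable (Yproc ξ η ψ n) :=
  Finset.measurable_sum _ fun i _ => meas_xiBeta ξ η ψ hξ hη hψm i

end Meas

section GfieldMeas
variable [mΩ : MeasurableSpace Ω] (ξ η ζ ψ : ℕ → Ω → ℝ)

lemma measT_G (n : ℕ) {k : ℕ} (hk : 1 ≤ k) (hkn : k ≤ n) :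
    Measurable[Gfield ξ η n] (fun ω => Tproc ξ η k ω) :=
  measurable_iff_comap_le.mpr (le_iSup₂
    (f := fun k (_ : k ∈ Finset.Icc 1 n) =>
      MeasurableSpace.comap (fun ω => Tproc ξ η k ω) inferInstance)
    k (Finset.mem_Icc.mpr ⟨hk, hkn⟩))

lemma measT_G' (n : ℕ) {k : ℕ} (hkn : k ≤ n) :
    Measurable[Gfield ξ η n] (fun ω => Tproc ξ η k ω) := by
  rcases Nat.eq_zero_or_pos k with rfl | hk
  · have h0 : (fun ω => Tproc ξ η 0 ω) = fun _ => 0 := by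
      funext ω; simp [Tproc]
    rw [h0]; exact measurable_const
  · exact measT_G ξ η n hk hkn

lemma measQ_G (n : ℕ) {k : ℕ} (hk : 1 ≤ k) (hkn : k ≤ n) :
    Measurable[Gfield ξ η n] (fun ω => Qproc ξ η k ω) := by
  have heq : (fun ω => Qproc ξ η k ω) = fun ω => Tproc ξ η k ω - Tproc ξ η (k - 1) ω := by
    funext ω
    obtain ⟨m, rfl⟩ : ∃ m, k = m + 1 := ⟨k - 1, by omega⟩
    have := Tproc_succ ξ η m ω
    simp only [Nat.add_sub_cancel]
    omega
  rw [heq]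
  exact (measT_G' ξ η n hkn).sub (measT_G' ξ η n (by omega))

lemma Hfield_le_M
    (hξv : ∀ n ω, ξ n ω = 1 ∨ ξ n ω = -1) (hηv : ∀ n ω, η n ω = 1 ∨ η n ω = -1) (n : ℕ) :
    Hfield ξ η n ≤
      ((⨆ t ∈ {t : ℕ | 1 ≤ t}, MeasurableSpace.comap (Xproc ξ η ζ t) inferInstance) ⊔
        (⨆ t ∈ {t : ℕ | 1 ≤ t}, MeasurableSpace.comap (Yproc ξ η ψ t) inferInstance)) ⊔
        Gfield ξ η n := by
  set mX := ⨆ t ∈ {t : ℕ | 1 ≤ t}, MeasurableSpace.comap (Xproc ξ η ζ t) inferInstance with hmX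
  set mY := ⨆ t ∈ {t : ℕ | 1 ≤ t}, MeasurableSpace.comap (Yproc ξ η ψ t) inferInstance with hmY
  set M := (mX ⊔ mY) ⊔ Gfield ξ η n with hM
  have hXM : ∀ t, Measurable[M] (Xproc ξ η ζ t) := by
    intro t
    rcases Nat.eq_zero_or_pos t with rfl | ht
    · have h0 : Xproc ξ η ζ 0 = fun _ => 0 := by funext ω; simp [Xproc]
      rw [h0]; exact measurable_const
    · refine measurable_iff_comap_le.mpr (le_trans ?_ (le_sup_left.trans le_sup_left))
      exact le_iSup₂ (f := fun t (_ : t ∈ {t : ℕ | 1 ≤ t}) =>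
        MeasurableSpace.comap (Xproc ξ η ζ t) inferInstance) t ht
  have hYM : ∀ t, Measurable[M] (Yproc ξ η ψ t) := by
    intro t
    rcases Nat.eq_zero_or_pos t with rfl | ht
    · have h0 : Yproc ξ η ψ 0 = fun _ => 0 := by funext ω; simp [Yproc]
      rw [h0]; exact measurable_const
    · refine measurable_iff_comap_le.mpr (le_trans ?_ (le_sup_right.trans le_sup_left))
      exact le_iSup₂ (f := fun t (_ : t ∈ {t : ℕ | 1 ≤ t}) =>
        MeasurableSpace.comap (Yproc ξ η ψ t) inferInstance) t ht
  have hGM : Gfield ξ η n ≤ M := le_sup_right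
  have hTM : ∀ k, k ≤ n → Measurable[M] (fun ω => Tproc ξ η k ω) := fun k hkn =>
    (measT_G' ξ η n hkn).mono hGM le_rfl
  have hQM : ∀ k, 1 ≤ k → k ≤ n → Measurable[M] (fun ω => Qproc ξ η k ω) := fun k hk hkn =>
    (measQ_G ξ η n hk hkn).mono hGM le_rfl
  have hxiM : ∀ k, 1 ≤ k → k ≤ n → Measurable[M] (ξ k) := by
    intro k hk hkn
    have heq : ξ k = fun ω =>
        (fun (p : ℕ × ℕ) (ω' : Ω) => if p.2 = 1
          then Xproc ξ η ζ p.1 ω' - Xproc ξ η ζ (p.1 - 1) ω'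
          else Yproc ξ η ψ (k - p.1) ω' - Yproc ξ η ψ (k - p.1 - 1) ω')
        ((fun ω => (Tproc ξ η k ω, Qproc ξ η k ω)) ω) ω := by
      funext ω
      exact xi_reconstruct ξ η ζ ψ hk ω
    rw [heq]
    refine measurable_glue (fun ω => (Tproc ξ η k ω, Qproc ξ η k ω))
      (fun (p : ℕ × ℕ) (ω' : Ω) => if p.2 = 1
        then Xproc ξ η ζ p.1 ω' - Xproc ξ η ζ (p.1 - 1) ω'
        else Yproc ξ η ψ (k - p.1) ω' - Yproc ξ η ψ (k - p.1 - 1) ω') ?_ ?_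
    · intro v
      have hv : {ω | (Tproc ξ η k ω, Qproc ξ η k ω) = v}
          = (fun ω => Tproc ξ η k ω) ⁻¹' {v.1} ∩ (fun ω => Qproc ξ η k ω) ⁻¹' {v.2} := by
        ext ω; simp [Prod.ext_iff]
      rw [hv]
      exact ((hTM k hkn) (measurableSet_singleton v.1)).inter
        ((hQM k hk hkn) (measurableSet_singleton v.2))
    · intro p
      by_cases h2 : p.2 = 1
      · simp only [h2, if_true]
        exact (hXM p.1).sub (hXM (p.1 - 1))
      · simp only [h2, if_false]
        exact (hYM (k - p.1)).sub (hYM (k - p.1 - 1))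
  have hetaM : ∀ k, 1 ≤ k → k ≤ n → Measurable[M] (η k) := by
    intro k hk hkn
    have heq : η k = fun ω => if Qproc ξ η k ω = 1 then ξ k ω else -ξ k ω :=
      funext fun ω => eta_reconstruct ξ η hξv hηv k ω
    rw [heq]
    exact Measurable.ite ((hQM k hk hkn) (measurableSet_singleton 1))
      (hxiM k hk hkn) (hxiM k hk hkn).neg
  refine iSup₂_le fun k hk => ?_
  obtain ⟨h1, h2⟩ := Finset.mem_Icc.mp hk
  exact sup_le (measurable_iff_comap_le.mp (hxiM k h1 h2))
    (measurable_iff_comap_le.mp (hetaM k h1 h2))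

end GfieldMeas


theorem stmt_14
    {Ω : Type*} [mΩ : MeasurableSpace Ω] (P : Measure Ω) [IsProbabilityMeasure P]
    (F : MeasureTheory.Filtration ℕ mΩ) (hF0 : F 0 = ⊥)
    (ξ η : ℕ → Ω → ℝ)
    (hξm : ∀ n, 1 ≤ n → Measurable[F n] (ξ n))
    (hηm : ∀ n, 1 ≤ n → Measurable[F n] (η n))
    (hξv : ∀ n ω, ξ n ω = 1 ∨ ξ n ω = -1)
    (hηv : ∀ n ω, η n ω = 1 ∨ η n ω = -1)
    (hhalf : ∀ n, 1 ≤ n →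
      (P[({ω | ξ n ω = 1}).indicator (fun _ => (1 : ℝ)) | F (n - 1)] =ᵐ[P] fun _ => 1 / 2) ∧
      (P[({ω | ξ n ω = -1}).indicator (fun _ => (1 : ℝ)) | F (n - 1)] =ᵐ[P] fun _ => 1 / 2) ∧
      (P[({ω | η n ω = 1}).indicator (fun _ => (1 : ℝ)) | F (n - 1)] =ᵐ[P] fun _ => 1 / 2) ∧
      (P[({ω | η n ω = -1}).indicator (fun _ => (1 : ℝ)) | F (n - 1)] =ᵐ[P] fun _ => 1 / 2))
    (ζ ψ : ℕ → Ω → ℝ)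
    (hζm : ∀ n, Measurable (ζ n)) (hψm : ∀ n, Measurable (ψ n))
    (hζd : ∀ n, P {ω | ζ n ω = 1} = 2⁻¹ ∧ P {ω | ζ n ω = -1} = 2⁻¹)
    (hψd : ∀ n, P {ω | ψ n ω = 1} = 2⁻¹ ∧ P {ω | ψ n ω = -1} = 2⁻¹)
    (hindep : iIndep (fun i : ℕ ⊕ ℕ ⊕ Unit =>
      Sum.elim (fun n => MeasurableSpace.comap (ζ n) inferInstance)
        (Sum.elim (fun n => MeasurableSpace.comap (ψ n) inferInstance)
          (fun _ => ⨆ n, (F n : MeasurableSpace Ω))) i) P)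
    (hXYT : iIndep
      ![⨆ n ∈ {n : ℕ | 1 ≤ n}, MeasurableSpace.comap (Xproc ξ η ζ n) inferInstance,
        ⨆ n ∈ {n : ℕ | 1 ≤ n}, MeasurableSpace.comap (Yproc ξ η ψ n) inferInstance,
        ⨆ n ∈ {n : ℕ | 1 ≤ n}, MeasurableSpace.comap (fun ω => Tproc ξ η n ω) inferInstance] P) :
    ∀ n : ℕ, 1 ≤ n → CondIndepGiven P (Gfield ξ η n) (Hfield ξ η n) (GfieldInf ξ η) := by
  intro n hn
  intro A B hA hB
  have hξa : ∀ k, 1 ≤ k → Measurable (ξ k) := fun k hk s hs => F.le k _ (hξm k hk hs)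
  have hηa : ∀ k, 1 ≤ k → Measurable (η k) := fun k hk s hs => F.le k _ (hηm k hk hs)
  have hmX_le : (⨆ t ∈ {t : ℕ | 1 ≤ t},
      MeasurableSpace.comap (Xproc ξ η ζ t) inferInstance) ≤ mΩ :=
    iSup₂_le fun t _ => measurable_iff_comap_le.mp (meas_X ξ η ζ hξa hηa hζm t)
  have hmY_le : (⨆ t ∈ {t : ℕ | 1 ≤ t},
      MeasurableSpace.comap (Yproc ξ η ψ t) inferInstance) ≤ mΩ :=
    iSup₂_le fun t _ => measurable_iff_comap_le.mp (meas_Y ξ η ψ hξa hηa hψm t)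
  have hmTinf_le : GfieldInf ξ η ≤ mΩ :=
    iSup₂_le fun k _ => measurable_iff_comap_le.mp (meas_T ξ η hξa hηa k)
  have hG_le : Gfield ξ η n ≤ GfieldInf ξ η :=
    iSup₂_le fun k hk => le_iSup₂
      (f := fun k (_ : k ∈ {k : ℕ | 1 ≤ k}) =>
        MeasurableSpace.comap (fun ω => Tproc ξ η k ω) inferInstance)
      k ((Finset.mem_Icc.mp hk).1)
  have hST : Indep
      ((⨆ t ∈ {t : ℕ | 1 ≤ t}, MeasurableSpace.comap (Xproc ξ η ζ t) inferInstance) ⊔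
        (⨆ t ∈ {t : ℕ | 1 ≤ t}, MeasurableSpace.comap (Yproc ξ η ψ t) inferInstance))
      (GfieldInf ξ η) P := by
    have h_le : ∀ i : Fin 3,
        (![⨆ t ∈ {t : ℕ | 1 ≤ t}, MeasurableSpace.comap (Xproc ξ η ζ t) inferInstance,
           ⨆ t ∈ {t : ℕ | 1 ≤ t}, MeasurableSpace.comap (Yproc ξ η ψ t) inferInstance,
           ⨆ k ∈ {k : ℕ | 1 ≤ k},
             MeasurableSpace.comap (fun ω => Tproc ξ η k ω) inferInstance] i) ≤ mΩ := by
      intro i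
      fin_cases i
      · exact hmX_le
      · exact hmY_le
      · exact hmTinf_le
    have h := indep_biSup_compl h_le hXYT {0, 1}
    set mvec := ![⨆ t ∈ {t : ℕ | 1 ≤ t}, MeasurableSpace.comap (Xproc ξ η ζ t) inferInstance,
           ⨆ t ∈ {t : ℕ | 1 ≤ t}, MeasurableSpace.comap (Yproc ξ η ψ t) inferInstance,
           ⨆ k ∈ {k : ℕ | 1 ≤ k},
             MeasurableSpace.comap (fun ω => Tproc ξ η k ω) inferInstance] with hmvec
    have h0 : mvec 0 ≤ ⨆ i ∈ ({0, 1} : Set (Fin 3)), mvec i := le_iSup₂ (f := fun (i : Fin 3) (_ : i ∈ ({0, 1} : Set (Fin 3))) => mvec i) 0 (Set.mem_insert 0 _)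
    have h1 : mvec 1 ≤ ⨆ i ∈ ({0, 1} : Set (Fin 3)), mvec i := le_iSup₂ (f := fun (i : Fin 3) (_ : i ∈ ({0, 1} : Set (Fin 3))) => mvec i) 1 (Set.mem_insert_of_mem 0 rfl)
    have h2 : mvec 2 ≤ ⨆ i ∈ ({0, 1} : Set (Fin 3))ᶜ, mvec i := le_iSup₂ (f := fun (i : Fin 3) (_ : i ∈ ({0, 1} : Set (Fin 3))ᶜ) => mvec i) 2 (by rintro (h | h) <;> exact absurd h (by decide))
    exact indep_of_indep_of_le_right (indep_of_indep_of_le_left h (sup_le h0 h1)) h2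
  have hA' : MeasurableSet[
      ((⨆ t ∈ {t : ℕ | 1 ≤ t}, MeasurableSpace.comap (Xproc ξ η ζ t) inferInstance) ⊔
        (⨆ t ∈ {t : ℕ | 1 ≤ t}, MeasurableSpace.comap (Yproc ξ η ψ t) inferInstance)) ⊔
      Gfield ξ η n] A :=
    Hfield_le_M ξ η ζ ψ hξv hηv n A hA
  exact condexp_inter_eq_mul P (sup_le hmX_le hmY_le) hmTinf_le hG_le hST hA' hB
end
end
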